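/- Let (L(s), P(s))_{s∈S} be a solution of the cmKP hierarchy and W(s) = (w_0(s) + w_1(s)∂^{−1} + ⋯)∂^{n_s} a corresponding dressing operator. Then L^mkp(s) := w_0(s)^{−1}L(s)w_0(s) and P^mkp(s) := w_0(s+1)^{−1}P(s)w_0(s) constitute a solution of the mKP hierarchy, and W^mkp(s) := w_0(s)^{−1}W(s) is its dressing operator. -/

import Mathlib

noncomputable section
namespace CmKPPaper

open scoped BigOperators

/-- Ring of "functions of `x` and `t = (t₁, t₂, …)`", modelled as formal power
series in countably many variables, where variable `0` is `x` and variable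
`n ≥ 1` is `tₙ`. -/
abbrev Func : Type := MvPowerSeries ℕ ℝ

/-- Formal partial derivative with respect to the `i`-th variable. -/
def D (i : ℕ) (f : Func) : Func :=
  fun m => ((m i : ℝ) + 1) * f (m + Finsupp.single i 1)

/-- `∂/∂x`. -/
def dx : Func → Func := D 0

/-- iterated `∂/∂x`. -/
def dxI (k : ℕ) : Func → Func := dx^[k]

/-- Generalized binomial coefficient `C(m, k)` for `m : ℤ`. -/
def gch (m : ℤ) (k : ℕ) : ℝ :=
  (∏ i ∈ Finset.range k, ((m : ℝ) - (i : ℝ))) / (Nat.factorial k : ℝ)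

/-- Microdifferential operators `∑_{j ≤ N} a_j ∂^j` in `∂ = ∂/∂x`, encoded by
their coefficient families `j ↦ a_j`. -/
abbrev MDO : Type := ℤ → Func

/-- Product of microdifferential operators (Leibniz rule with generalized
binomial coefficients). -/
def mul (A B : MDO) : MDO := fun j =>
  ∑ᶠ p : ℤ × ℕ, gch p.1 p.2 • (A p.1 * dxI p.2 (B (j - p.1 + (p.2 : ℤ))))

def one : MDO := fun j => if j = 0 then 1 else 0
def del : MDO := fun j => if j = 1 then 1 else 0
def delInv : MDO := fun j => if j = -1 then 1 else 0

/-- multiplication operator by a function. -/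
def cOp (f : Func) : MDO := fun j => if j = 0 then f else 0

def npow (A : MDO) : ℕ → MDO
  | 0 => one
  | n + 1 => mul A (npow A n)

/-- Commutator. -/
def comm (A B : MDO) : MDO := mul A B - mul B A

/-- derivative `∂/∂tᵢ` applied to all coefficients of an operator. -/
def opD (i : ℕ) (A : MDO) : MDO := fun j => D i (A j)

/-- `A_{>0}`. -/
def pos (A : MDO) : MDO := fun j => if 0 < j then A j else 0
/-- `A_{≥0}`. -/
def nonneg (A : MDO) : MDO := fun j => if 0 ≤ j then A j else 0

/-- Formal adjoint `A^*` (`x^* = x`, `∂^* = -∂`). -/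
def adj (A : MDO) : MDO := fun j =>
  ∑ᶠ k : ℕ, (((-1 : ℝ) ^ (j + (k : ℤ))) * gch (j + (k : ℤ)) k) • dxI k (A (j + (k : ℤ)))

/-- `L` has the cmKP form `∂ + u₁ + u₂∂⁻¹ + ⋯`. -/
def IsL (L : MDO) : Prop := L 1 = 1 ∧ ∀ j, 1 < j → L j = 0

/-- `Bₙ = (Lⁿ)_{>0}`. -/
def Bop (L : MDO) (n : ℕ) : MDO := pos (npow L n)

/-- `B^c_n = Bₙ - Lⁿ = -(Lⁿ)_{≤0}`. -/
def Bc (L : MDO) (n : ℕ) : MDO := Bop L n - npow L n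


/-- `S` is a set of consecutive integers. -/
def Consecutive (S : Set ℤ) : Prop :=
  ∀ a c, a ∈ S → c ∈ S → ∀ b, a ≤ b → b ≤ c → b ∈ S

/-- `(L(s), P(s))_{s ∈ S}` is a solution of the cmKP hierarchy (discrete
parameters `(n_s)`, `m_s = n_{s+1} - n_s ≥ 1`).  Here `IsUnit` of the leading
coefficient of `P(s)` encodes that the function `p₀(s)` is nonvanishing. -/
structure CmKPSol (S : Set ℤ) (nn : ℤ → ℤ) (L P : ℤ → MDO) : Prop where
  consec : Consecutive S
  hmono : ∀ s, s ∈ S → s + 1 ∈ S → nn s < nn (s + 1)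
  hL : ∀ s ∈ S, IsL (L s)
  hPhigh : ∀ s, s ∈ S → s + 1 ∈ S → ∀ j, nn (s + 1) - nn s < j → P s j = 0
  hPlow : ∀ s, s ∈ S → s + 1 ∈ S → ∀ j, j ≤ 0 → P s j = 0
  hP0 : ∀ s, s ∈ S → s + 1 ∈ S → IsUnit (P s (nn (s + 1) - nn s))
  lax : ∀ s ∈ S, ∀ n : ℕ, 1 ≤ n → opD n (L s) = comm (Bop (L s) n) (L s)
  inter : ∀ s, s ∈ S → s + 1 ∈ S → mul (L (s + 1)) (P s) = mul (P s) (L s)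
  evol : ∀ s, s ∈ S → s + 1 ∈ S → ∀ n : ℕ, 1 ≤ n →
    opD n (P s) = mul (Bop (L (s + 1)) n) (P s) - mul (P s) (Bop (L s) n)

/-- `W(s) = (w₀(s) + w₁(s)∂⁻¹ + ⋯)∂^{n_s}`, `w₀ ≠ 0`, is a dressing operator
for the solution `(L(s), P(s))_{s ∈ S}` of the cmKP hierarchy. -/
structure CmKPDress (S : Set ℤ) (nn : ℤ → ℤ) (L P W : ℤ → MDO) : Prop where
  hform : ∀ s ∈ S, ∀ j, nn s < j → W s j = 0
  hw0 : ∀ s ∈ S, IsUnit (W s (nn s))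
  hLW : ∀ s ∈ S, mul (L s) (W s) = mul (W s) del
  hPW : ∀ s, s ∈ S → s + 1 ∈ S → mul (P s) (W s) = W (s + 1)
  hDW : ∀ s ∈ S, ∀ n : ℕ, 1 ≤ n → opD n (W s) = mul (Bc (L s) n) (W s)

/-- `L` has the mKP form `∂ + u₂∂⁻¹ + u₃∂⁻² + ⋯`. -/
def IsLmkp (L : MDO) : Prop := L 1 = 1 ∧ L 0 = 0 ∧ ∀ j, 1 < j → L j = 0

/-- `B^mkp_n = (Lⁿ)_{≥0}`. -/
def Bmkp (L : MDO) (n : ℕ) : MDO := nonneg (npow L n)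

/-- `B^{mkp,c}_n = B^mkp_n - Lⁿ = -(Lⁿ)_{<0}`. -/
def Bcmkp (L : MDO) (n : ℕ) : MDO := Bmkp L n - npow L n

/-- `(L(s), P(s))_{s ∈ S}` is a solution of the mKP hierarchy, with monic
`P(s) = ∂^{m_s} + q₁(s)∂^{m_s-1} + ⋯ + q_{m_s}(s)`. -/
structure MkpSol (S : Set ℤ) (nn : ℤ → ℤ) (L P : ℤ → MDO) : Prop where
  consec : Consecutive S
  hmono : ∀ s, s ∈ S → s + 1 ∈ S → nn s < nn (s + 1)
  hL : ∀ s ∈ S, IsLmkp (L s)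
  hPhigh : ∀ s, s ∈ S → s + 1 ∈ S → ∀ j, nn (s + 1) - nn s < j → P s j = 0
  hPlow : ∀ s, s ∈ S → s + 1 ∈ S → ∀ j, j < 0 → P s j = 0
  hPmonic : ∀ s, s ∈ S → s + 1 ∈ S → P s (nn (s + 1) - nn s) = 1
  lax : ∀ s ∈ S, ∀ n : ℕ, 1 ≤ n → opD n (L s) = comm (Bmkp (L s) n) (L s)
  inter : ∀ s, s ∈ S → s + 1 ∈ S → mul (L (s + 1)) (P s) = mul (P s) (L s)
  evol : ∀ s, s ∈ S → s + 1 ∈ S → ∀ n : ℕ, 1 ≤ n →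
    opD n (P s) = mul (Bmkp (L (s + 1)) n) (P s) - mul (P s) (Bmkp (L s) n)

/-- `W(s) = (1 + w₁(s)∂⁻¹ + ⋯)∂^{n_s}` is a dressing operator for a solution of
the mKP hierarchy. -/
structure MkpDress (S : Set ℤ) (nn : ℤ → ℤ) (L P W : ℤ → MDO) : Prop where
  hform : ∀ s ∈ S, ∀ j, nn s < j → W s j = 0
  htop : ∀ s ∈ S, W s (nn s) = 1
  hLW : ∀ s ∈ S, mul (L s) (W s) = mul (W s) del
  hPW : ∀ s, s ∈ S → s + 1 ∈ S → mul (P s) (W s) = W (s + 1)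
  hDW : ∀ s ∈ S, ∀ n : ℕ, 1 ≤ n → opD n (W s) = mul (Bcmkp (L s) n) (W s)


-- Part 1 : derivative lemmas

lemma Func.add_apply (f g : Func) (m : ℕ →₀ ℕ) : (f + g) m = f m + g m := rfl
lemma Func.smul_apply (r : ℝ) (f : Func) (m : ℕ →₀ ℕ) : (r • f) m = r * f m := rfl
lemma Func.zero_apply (m : ℕ →₀ ℕ) : (0 : Func) m = 0 := rfl
lemma Func.neg_apply (f : Func) (m : ℕ →₀ ℕ) : (-f) m = -(f m) := rfl
lemma Func.sub_apply (f g : Func) (m : ℕ →₀ ℕ) : (f - g) m = f m - g m := rfl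

lemma Func.mul_apply (f g : Func) (m : ℕ →₀ ℕ) :
    (f * g) m = ∑ p ∈ Finset.HasAntidiagonal.antidiagonal m, f p.1 * g p.2 :=
  MvPowerSeries.coeff_mul (n := m) (φ := f) (ψ := g)

lemma D_add (i : ℕ) (f g : Func) : D i (f + g) = D i f + D i g := by
  funext m
  simp [D, Func.add_apply]
  ring

lemma D_smul (i : ℕ) (r : ℝ) (f : Func) : D i (r • f) = r • D i f := by
  funext m
  simp [D, Func.smul_apply]
  ring

lemma D_zero (i : ℕ) : D i (0 : Func) = 0 := by
  funext m; simp [D, Func.zero_apply]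

lemma D_neg (i : ℕ) (f : Func) : D i (-f) = -(D i f) := by
  funext m; simp [D, Func.neg_apply]

lemma D_sub (i : ℕ) (f g : Func) : D i (f - g) = D i f - D i g := by
  funext m; simp [D, Func.sub_apply]; ring

lemma D_sum (i : ℕ) {α : Type*} (s : Finset α) (F : α → Func) :
    D i (∑ a ∈ s, F a) = ∑ a ∈ s, D i (F a) := by
  classical
  induction s using Finset.induction_on with
  | empty => simp [D_zero]
  | @insert a s ha ih => rw [Finset.sum_insert ha, D_add, ih, Finset.sum_insert ha]

lemma D_one (i : ℕ) : D i (1 : Func) = 0 := by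
  funext m
  have h : (1 : Func) (m + Finsupp.single i 1) = 0 := by
    have h2 := MvPowerSeries.coeff_one (R := ℝ) (σ := ℕ) (m + Finsupp.single i 1)
    rw [MvPowerSeries.coeff_apply] at h2
    rw [h2, if_neg]
    intro h
    have := DFunLike.congr_fun h i
    simp at this
  show ((m i : ℝ) + 1) * (1 : Func) (m + Finsupp.single i 1) = (0:Func) m
  rw [h, mul_zero]; rfl

lemma D_comm (i j : ℕ) (f : Func) : D i (D j f) = D j (D i f) := by
  funext m
  simp only [D, Finsupp.add_apply, Finsupp.single_apply]
  rw [add_right_comm m (Finsupp.single j 1) (Finsupp.single i 1)]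
  rcases eq_or_ne i j with h | h
  · subst h; ring
  · rw [if_neg h, if_neg (Ne.symm h)]
    push_cast
    ring


lemma sum_shift1 (i : ℕ) (h k : Func) (m : ℕ →₀ ℕ) :
    ∑ p ∈ Finset.HasAntidiagonal.antidiagonal (m + Finsupp.single i 1), ((p.1 : ℕ →₀ ℕ) i : ℝ) * (h p.1 * k p.2)
      = ∑ p ∈ Finset.HasAntidiagonal.antidiagonal m,
          ((((p.1 : ℕ →₀ ℕ) i : ℝ) + 1) * h (p.1 + Finsupp.single i 1)) * k p.2 := by
  classical
  set e := Finsupp.single i 1 with he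
  rw [← Finset.sum_filter_of_ne
    (p := fun p : (ℕ →₀ ℕ) × (ℕ →₀ ℕ) => p.1 i ≠ 0)
    (by rintro ⟨a, b⟩ hp hne h0; apply hne; show ((a i : ℕ) : ℝ) * (h a * k b) = 0
        rw [h0]; push_cast; ring)]
  refine Finset.sum_nbij' (fun p => (p.1 - e, p.2)) (fun p => (p.1 + e, p.2)) ?_ ?_ ?_ ?_ ?_
  · rintro ⟨a, b⟩ hab
    simp only [Finset.mem_filter, Finset.HasAntidiagonal.mem_antidiagonal] at hab
    obtain ⟨hab, hne⟩ := hab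
    have hle : e ≤ a := by
      rw [he, Finsupp.single_le_iff]; omega
    rw [Finset.HasAntidiagonal.mem_antidiagonal]
    show a - e + b = m
    rw [tsub_add_eq_add_tsub hle, hab, add_tsub_cancel_right]
  · rintro ⟨a, b⟩ hab
    simp only [Finset.HasAntidiagonal.mem_antidiagonal] at hab
    simp only [Finset.mem_filter, Finset.HasAntidiagonal.mem_antidiagonal]
    constructor
    · show a + e + b = m + e
      rw [add_right_comm, hab]
    · show (a + e) i ≠ 0
      rw [Finsupp.add_apply, he, Finsupp.single_eq_same]; omega
  · rintro ⟨a, b⟩ hab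
    simp only [Finset.mem_filter, Finset.HasAntidiagonal.mem_antidiagonal] at hab
    have hle : e ≤ a := by
      rw [he, Finsupp.single_le_iff]; omega
    show (a - e + e, b) = (a, b)
    rw [tsub_add_cancel_of_le hle]
  · rintro ⟨a, b⟩ hab
    show (a + e - e, b) = (a, b)
    rw [add_tsub_cancel_right]
  · rintro ⟨a, b⟩ hab
    simp only [Finset.mem_filter, Finset.HasAntidiagonal.mem_antidiagonal] at hab
    obtain ⟨hab, hne⟩ := hab
    have hle : e ≤ a := by
      rw [he, Finsupp.single_le_iff]; omega
    show (a i : ℝ) * (h a * k b) = (((a - e) i : ℝ) + 1) * h (a - e + e) * k b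
    rw [tsub_add_cancel_of_le hle]
    have : (a - e) i = a i - 1 := by
      rw [Finsupp.tsub_apply, he, Finsupp.single_eq_same]
    rw [this]
    have : ((a i - 1 : ℕ) : ℝ) + 1 = (a i : ℝ) := by
      have : 1 ≤ a i := by omega
      push_cast [this]
      ring
    rw [this, mul_assoc]

lemma sum_shift2 (i : ℕ) (h k : Func) (m : ℕ →₀ ℕ) :
    ∑ p ∈ Finset.HasAntidiagonal.antidiagonal (m + Finsupp.single i 1), ((p.2 : ℕ →₀ ℕ) i : ℝ) * (h p.1 * k p.2)
      = ∑ p ∈ Finset.HasAntidiagonal.antidiagonal m,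
          h p.1 * ((((p.2 : ℕ →₀ ℕ) i : ℝ) + 1) * k (p.2 + Finsupp.single i 1)) := by
  classical
  have swap1 : ∑ p ∈ Finset.HasAntidiagonal.antidiagonal (m + Finsupp.single i 1), ((p.2 : ℕ →₀ ℕ) i : ℝ) * (h p.1 * k p.2)
      = ∑ p ∈ Finset.HasAntidiagonal.antidiagonal (m + Finsupp.single i 1), ((p.1 : ℕ →₀ ℕ) i : ℝ) * (k p.1 * h p.2) := by
    refine Finset.sum_nbij' Prod.swap Prod.swap ?_ ?_ ?_ ?_ ?_ <;>
      simp [Finset.HasAntidiagonal.mem_antidiagonal, add_comm, mul_comm, mul_left_comm]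
  rw [swap1, sum_shift1]
  refine Finset.sum_nbij' Prod.swap Prod.swap ?_ ?_ ?_ ?_ ?_ <;>
    simp [Finset.HasAntidiagonal.mem_antidiagonal, add_comm, mul_comm, mul_left_comm]

lemma D_mul (i : ℕ) (f g : Func) : D i (f * g) = D i f * g + f * D i g := by
  funext m
  rw [Func.add_apply]
  have hD : D i (f * g) m = ((m i : ℝ) + 1) * (f * g) (m + Finsupp.single i 1) := rfl
  rw [hD, Func.mul_apply, Func.mul_apply (D i f) g, Func.mul_apply f (D i g), Finset.mul_sum]
  have key : ∀ p ∈ Finset.HasAntidiagonal.antidiagonal (m + Finsupp.single i 1),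
      ((m i : ℝ) + 1) * (f p.1 * g p.2)
        = ((p.1 : ℕ →₀ ℕ) i : ℝ) * (f p.1 * g p.2) + ((p.2 : ℕ →₀ ℕ) i : ℝ) * (f p.1 * g p.2) := by
    rintro ⟨a, b⟩ hp
    rw [Finset.HasAntidiagonal.mem_antidiagonal] at hp
    have h1 : a i + b i = m i + 1 := by
      have := DFunLike.congr_fun hp i
      simpa [Finsupp.add_apply, Finsupp.single_eq_same] using this
    have h2 : ((a i : ℝ)) + (b i : ℝ) = (m i : ℝ) + 1 := by exact_mod_cast h1
    show ((m i : ℝ) + 1) * (f a * g b) = (a i : ℝ) * (f a * g b) + (b i : ℝ) * (f a * g b)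
    rw [← h2]; ring
  rw [Finset.sum_congr rfl key, Finset.sum_add_distrib, sum_shift1 i f g m, sum_shift2 i f g m]
  rfl


lemma dx_mul (f g : Func) : dx (f * g) = dx f * g + f * dx g := D_mul 0 f g

lemma dxI_zero_fun (f : Func) : dxI 0 f = f := rfl
lemma dxI_one_fun (f : Func) : dxI 1 f = dx f := rfl

lemma dxI_succ (k : ℕ) (f : Func) : dxI (k + 1) f = dx (dxI k f) :=
  Function.iterate_succ_apply' dx k f

lemma dxI_succ' (k : ℕ) (f : Func) : dxI (k + 1) f = dxI k (dx f) :=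
  Function.iterate_succ_apply dx k f

lemma dxI_add_app (a b : ℕ) (f : Func) : dxI (a + b) f = dxI a (dxI b f) := by
  unfold dxI
  rw [Function.iterate_add_apply]

lemma dxI_addf (k : ℕ) (f g : Func) : dxI k (f + g) = dxI k f + dxI k g := by
  induction k with
  | zero => rfl
  | succ n ih => rw [dxI_succ, ih, dxI_succ, dxI_succ]; exact D_add 0 _ _

lemma dxI_smul (k : ℕ) (r : ℝ) (f : Func) : dxI k (r • f) = r • dxI k f := by
  induction k with
  | zero => rfl
  | succ n ih => rw [dxI_succ, ih, dxI_succ]; exact D_smul 0 r _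

lemma dxI_zero (k : ℕ) : dxI k (0 : Func) = 0 := by
  induction k with
  | zero => rfl
  | succ n ih => rw [dxI_succ, ih]; exact D_zero 0

lemma dxI_neg (k : ℕ) (f : Func) : dxI k (-f) = -(dxI k f) := by
  induction k with
  | zero => rfl
  | succ n ih => rw [dxI_succ, ih, dxI_succ]; exact D_neg 0 _

lemma dxI_sub (k : ℕ) (f g : Func) : dxI k (f - g) = dxI k f - dxI k g := by
  induction k with
  | zero => rfl
  | succ n ih => rw [dxI_succ, ih, dxI_succ, dxI_succ]; exact D_sub 0 _ _

lemma dxI_sum (k : ℕ) {α : Type*} (s : Finset α) (F : α → Func) :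
    dxI k (∑ a ∈ s, F a) = ∑ a ∈ s, dxI k (F a) := by
  induction k with
  | zero => rfl
  | succ n ih =>
    rw [dxI_succ, ih, show dx = D 0 from rfl, D_sum]
    exact Finset.sum_congr rfl fun a _ => (dxI_succ n (F a)).symm

lemma dxI_one (k : ℕ) (hk : 1 ≤ k) : dxI k (1 : Func) = 0 := by
  obtain ⟨n, rfl⟩ := Nat.exists_eq_add_of_le hk
  rw [add_comm, dxI_add_app, dxI_one_fun]
  rw [show dx (1 : Func) = 0 from D_one 0, dxI_zero]

lemma D_dxI (i : ℕ) (k : ℕ) (f : Func) : D i (dxI k f) = dxI k (D i f) := by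
  induction k with
  | zero => rfl
  | succ n ih => rw [dxI_succ, dxI_succ, ← ih]; exact D_comm i 0 _

lemma dxI_mul (n : ℕ) (f g : Func) :
    dxI n (f * g) = ∑ a ∈ Finset.range (n + 1),
      (n.choose a : ℝ) • (dxI a f * dxI (n - a) g) := by
  induction n with
  | zero => simp [dxI_zero_fun]
  | succ n ih =>
    rw [dxI_succ, ih, show dx = D 0 from rfl, D_sum]
    have hterm : ∀ a ∈ Finset.range (n + 1),
        D 0 ((n.choose a : ℝ) • (dxI a f * dxI (n - a) g))
          = (n.choose a : ℝ) • (dxI (a + 1) f * dxI (n - a) g)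
            + (n.choose a : ℝ) • (dxI a f * dxI (n - a + 1) g) := by
      intro a ha
      rw [D_smul, D_mul, smul_add]
      rw [show D 0 (dxI a f) = dxI (a + 1) f from (dxI_succ a f).symm,
          show D 0 (dxI (n - a) g) = dxI (n - a + 1) g from (dxI_succ (n - a) g).symm]
    rw [Finset.sum_congr rfl hterm, Finset.sum_add_distrib]
    -- RHS: goal sum over range (n+2)
    rw [Finset.sum_range_succ' (fun a => ((n + 1).choose a : ℝ) • (dxI a f * dxI (n + 1 - a) g)) (n + 1)]
    have hsplit : ∀ a ∈ Finset.range (n + 1),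
        (((n + 1).choose (a + 1) : ℝ)) • (dxI (a + 1) f * dxI (n + 1 - (a + 1)) g)
        = ((n.choose a : ℝ)) • (dxI (a + 1) f * dxI (n - a) g)
          + ((n.choose (a + 1) : ℝ)) • (dxI (a + 1) f * dxI (n - a) g) := by
      intro a ha
      rw [show n + 1 - (a + 1) = n - a by omega, Nat.choose_succ_succ]
      push_cast
      rw [add_smul]
    rw [Finset.sum_congr rfl hsplit, Finset.sum_add_distrib]
    have h2 : ∑ a ∈ Finset.range (n + 1), ((n.choose (a + 1) : ℝ)) • (dxI (a + 1) f * dxI (n - a) g)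
        + ((n + 1).choose 0 : ℝ) • (dxI 0 f * dxI (n + 1 - 0) g)
        = ∑ a ∈ Finset.range (n + 1), (n.choose a : ℝ) • (dxI a f * dxI (n - a + 1) g) := by
      rw [Finset.sum_range_succ (fun a => ((n.choose (a + 1) : ℝ)) • (dxI (a + 1) f * dxI (n - a) g)) n]
      rw [Nat.choose_succ_self]
      push_cast
      rw [zero_smul, add_zero]
      rw [Finset.sum_range_succ' (fun a => ((n.choose a : ℝ)) • (dxI a f * dxI (n - a + 1) g)) n]
      congr 1
      · apply Finset.sum_congr rfl
        intro a ha
        rw [Finset.mem_range] at ha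
        rw [show n - (a + 1) + 1 = n - a by omega]
      · norm_num
    rw [add_assoc, h2]


-- Part 2 : gch lemmas

lemma gch_zero_right (m : ℤ) : gch m 0 = 1 := by simp [gch]

lemma gch_one_one : gch 1 1 = 1 := by simp [gch]

lemma gch_eq_zero {m : ℤ} {k : ℕ} (h0 : 0 ≤ m) (h : m < k) : gch m k = 0 := by
  unfold gch
  rw [Finset.prod_eq_zero (i := m.toNat) (by rw [Finset.mem_range]; omega)]
  · simp
  · rw [show ((m.toNat : ℕ) : ℝ) = (m : ℝ) by exact_mod_cast congrArg Int.cast (Int.toNat_of_nonneg h0)]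
    ring

lemma gch_zero_left (k : ℕ) : gch 0 k = if k = 0 then 1 else 0 := by
  rcases Nat.eq_zero_or_pos k with h | h
  · subst h; simp [gch]
  · rw [if_neg (by omega), gch_eq_zero le_rfl (by exact_mod_cast h)]

lemma gch_pascal (m : ℤ) (k : ℕ) : gch (m + 1) (k + 1) = gch m (k + 1) + gch m k := by
  unfold gch
  have hc : ∀ i ∈ Finset.range (k+1), (((m+1 : ℤ)) : ℝ) - (i:ℝ) = ((m:ℝ) + 1 - (i:ℝ)) := by
    intro i _; push_cast; ring
  rw [Finset.prod_congr rfl hc]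
  rw [Finset.prod_range_succ' (fun i => ((m:ℝ) + 1 - (i:ℝ))) k]
  rw [Finset.prod_range_succ (fun i => ((m:ℝ) - (i:ℝ))) k]
  have hc2 : ∀ i ∈ Finset.range k, ((m:ℝ) + 1 - (((i+1 : ℕ)):ℝ)) = ((m:ℝ) - (i:ℝ)) := by
    intro i _; push_cast; ring
  rw [Finset.prod_congr rfl hc2]
  have hf1 : (Nat.factorial (k+1) : ℝ) = ((k:ℝ)+1) * (Nat.factorial k : ℝ) := by
    rw [Nat.factorial_succ]; push_cast; ring
  have hne : (Nat.factorial k : ℝ) ≠ 0 := by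
    exact_mod_cast Nat.factorial_ne_zero k
  have hne2 : ((k:ℝ)+1) ≠ 0 := by positivity
  rw [hf1]
  field_simp
  ring

lemma gch_trinom (p : ℤ) (a b : ℕ) :
    gch p (a + b) * ((a + b).choose a : ℝ) = gch p a * gch (p - (a:ℤ)) b := by
  unfold gch
  rw [Finset.prod_range_add (fun i => ((p:ℝ) - (i:ℝ))) a b]
  have hc : ∀ i ∈ Finset.range b, (((p - (a:ℤ) : ℤ)) : ℝ) - (i:ℝ) = ((p:ℝ) - (((a + i:ℕ)):ℝ)) := by
    intro i _; push_cast; ring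
  rw [Finset.prod_congr rfl hc]
  have hkey : ((a + b).choose a : ℝ) * (Nat.factorial a : ℝ) * (Nat.factorial b : ℝ)
      = (Nat.factorial (a + b) : ℝ) := by
    have h := Nat.add_choose_mul_factorial_mul_factorial b a
    rw [Nat.add_comm b a, mul_right_comm] at h
    exact_mod_cast congrArg (Nat.cast : ℕ → ℝ) h
  have h1 : (Nat.factorial (a+b) : ℝ) ≠ 0 := by exact_mod_cast Nat.factorial_ne_zero _
  have h2 : (Nat.factorial a : ℝ) ≠ 0 := by exact_mod_cast Nat.factorial_ne_zero _
  have h3 : (Nat.factorial b : ℝ) ≠ 0 := by exact_mod_cast Nat.factorial_ne_zero _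
  field_simp
  rw [← hkey]
  ring

lemma gch_vandermonde (x y : ℤ) (c : ℕ) :
    ∑ b ∈ Finset.range (c + 1), gch x b * gch y (c - b) = gch (x + y) c := by
  induction x using Int.induction_on generalizing c with
  | zero =>
    rw [Finset.sum_eq_single 0]
    · simp [gch_zero_right]
    · intro b hb hbne
      rw [gch_zero_left, if_neg hbne, zero_mul]
    · intro h; simp at h
  | succ x ihx =>
    rcases Nat.eq_zero_or_pos c with hc | hc
    · subst hc; simp [gch_zero_right]
    obtain ⟨c', rfl⟩ : ∃ c', c = c' + 1 := ⟨c - 1, by omega⟩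
    rw [Finset.sum_range_succ' (fun b => gch ((x:ℤ) + 1) b * gch y (c' + 1 - b)) (c' + 1)]
    have hterm : ∀ b ∈ Finset.range (c' + 1),
        gch ((x:ℤ) + 1) (b + 1) * gch y (c' + 1 - (b + 1))
          = gch (x:ℤ) (b + 1) * gch y (c' - b) + gch (x:ℤ) b * gch y (c' - b) := by
      intro b hb
      rw [gch_pascal, show c' + 1 - (b + 1) = c' - b by omega, add_mul]
    rw [Finset.sum_congr rfl hterm, Finset.sum_add_distrib]
    have e2 : ∑ b ∈ Finset.range (c' + 1), gch (x:ℤ) b * gch y (c' - b) = gch ((x:ℤ) + y) c' :=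
      ihx c'
    have e1 : (∑ b ∈ Finset.range (c' + 1), gch (x:ℤ) (b + 1) * gch y (c' - b))
        + gch ((x:ℤ) + 1) 0 * gch y (c' + 1 - 0)
        = gch ((x:ℤ) + y) (c' + 1) := by
      rw [← ihx (c' + 1)]
      rw [Finset.sum_range_succ' (fun b => gch (x:ℤ) b * gch y (c' + 1 - b)) (c' + 1)]
      have hcg : ∀ b ∈ Finset.range (c' + 1),
          gch (x:ℤ) (b + 1) * gch y (c' + 1 - (b + 1)) = gch (x:ℤ) (b + 1) * gch y (c' - b) := by
        intro b hb
        rw [show c' + 1 - (b + 1) = c' - b by omega]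
      rw [Finset.sum_congr rfl hcg, gch_zero_right, gch_zero_right]
    rw [add_right_comm, e1, e2, show (x:ℤ) + 1 + y = (x:ℤ) + y + 1 by ring, gch_pascal]
  | pred x ihx =>
    induction c with
    | zero => simp [gch_zero_right]
    | succ c ihc =>
      have hp : gch (-(x:ℤ) - 1 + y) (c + 1) = gch (-(x:ℤ) + y) (c + 1) - gch (-(x:ℤ) - 1 + y) c := by
        have h := gch_pascal (-(x:ℤ) - 1 + y) c
        rw [show -(x:ℤ) - 1 + y + 1 = -(x:ℤ) + y by ring] at h
        rw [h]; ring
      rw [hp, ← ihx (c + 1), ← ihc]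
      have hsum : ∑ b ∈ Finset.range (c + 2), gch (-(x:ℤ)) b * gch y (c + 1 - b)
          = (∑ b ∈ Finset.range (c + 2), gch (-(x:ℤ) - 1) b * gch y (c + 1 - b))
            + ∑ b ∈ Finset.range (c + 1), gch (-(x:ℤ) - 1) b * gch y (c - b) := by
        rw [Finset.sum_range_succ' (fun b => gch (-(x:ℤ)) b * gch y (c + 1 - b)) (c + 1)]
        rw [Finset.sum_range_succ' (fun b => gch (-(x:ℤ) - 1) b * gch y (c + 1 - b)) (c + 1)]
        have hterm : ∀ b ∈ Finset.range (c + 1),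
            gch (-(x:ℤ)) (b + 1) * gch y (c + 1 - (b + 1))
              = gch (-(x:ℤ) - 1) (b + 1) * gch y (c + 1 - (b + 1))
                + gch (-(x:ℤ) - 1) b * gch y (c - b) := by
          intro b hb
          have h := gch_pascal (-(x:ℤ) - 1) b
          rw [show -(x:ℤ) - 1 + 1 = -(x:ℤ) by ring] at h
          rw [h, show c + 1 - (b + 1) = c - b by omega, add_mul]
        rw [Finset.sum_congr rfl hterm, Finset.sum_add_distrib, gch_zero_right, gch_zero_right]
        ring
      rw [hsum]
      ring

-- Part 3 : MDO API

def trm (A B : MDO) (j : ℤ) (p : ℤ × ℕ) : Func :=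
  gch p.1 p.2 • (A p.1 * dxI p.2 (B (j - p.1 + (p.2 : ℤ))))

lemma mul_def (A B : MDO) (j : ℤ) : mul A B j = ∑ᶠ p : ℤ × ℕ, trm A B j p := rfl

lemma trm_zero_left {A B : MDO} {j : ℤ} {p : ℤ × ℕ} (h : A p.1 = 0) : trm A B j p = 0 := by
  simp [trm, h]

lemma trm_zero_right {A B : MDO} {j : ℤ} {p : ℤ × ℕ} (h : B (j - p.1 + (p.2 : ℤ)) = 0) :
    trm A B j p = 0 := by
  simp [trm, h, dxI_zero]

lemma trm_zero_gch {A B : MDO} {j : ℤ} {p : ℤ × ℕ} (h : gch p.1 p.2 = 0) : trm A B j p = 0 := by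
  simp [trm, h]

lemma mul_eq_sum {A B : MDO} {j : ℤ} (T : Finset (ℤ × ℕ))
    (hT : ∀ p : ℤ × ℕ, p ∉ T → trm A B j p = 0) :
    mul A B j = ∑ p ∈ T, trm A B j p := by
  rw [mul_def]
  apply finsum_eq_sum_of_support_subset
  intro p hp
  by_contra hpT
  exact hp (hT p hpT)

def Bdd (N : ℤ) (A : MDO) : Prop := ∀ j, N < j → A j = 0

lemma Bdd.mono {N M : ℤ} {A : MDO} (hA : Bdd N A) (h : N ≤ M) : Bdd M A :=
  fun j hj => hA j (by omega)

def box (NA NB j : ℤ) : Finset (ℤ × ℕ) :=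
  (Finset.Icc (j - NB) NA) ×ˢ (Finset.range ((NA + NB - j).toNat + 1))

lemma trm_zero_of_not_mem_box {NA NB : ℤ} {A B : MDO} (hA : Bdd NA A) (hB : Bdd NB B)
    {j : ℤ} {p : ℤ × ℕ} (hp : p ∉ box NA NB j) : trm A B j p = 0 := by
  by_cases h1 : NA < p.1
  · exact trm_zero_left (hA _ h1)
  push_neg at h1
  apply trm_zero_right
  apply hB
  by_contra hc
  push_neg at hc
  apply hp
  simp only [box, Finset.mem_product, Finset.mem_Icc, Finset.mem_range]
  have h4 : NA + NB - j ≤ ((NA + NB - j).toNat : ℤ) := Int.self_le_toNat _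
  refine ⟨⟨by omega, h1⟩, by omega⟩

lemma mul_eq_sum_box {NA NB : ℤ} {A B : MDO} (hA : Bdd NA A) (hB : Bdd NB B) (j : ℤ) :
    mul A B j = ∑ p ∈ box NA NB j, trm A B j p :=
  mul_eq_sum _ (fun _ hp => trm_zero_of_not_mem_box hA hB hp)

lemma Bdd.mul {NA NB : ℤ} {A B : MDO} (hA : Bdd NA A) (hB : Bdd NB B) :
    Bdd (NA + NB) (mul A B) := by
  intro j hj
  rw [mul_eq_sum (∅ : Finset (ℤ × ℕ))]
  · simp
  · intro p _
    rcases le_or_gt p.1 NA with h1 | h1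
    · exact trm_zero_right (hB _ (by omega))
    · exact trm_zero_left (hA _ h1)

lemma bdd_one : Bdd 0 one := by
  intro j hj; simp [one]; omega

lemma bdd_del : Bdd 1 del := by
  intro j hj; simp [del]; omega

lemma bdd_cOp (f : Func) : Bdd 0 (cOp f) := by
  intro j hj; simp [cOp]; omega

lemma bdd_opD {N : ℤ} {A : MDO} (hA : Bdd N A) (i : ℕ) : Bdd N (opD i A) := by
  intro j hj; show D i (A j) = 0; rw [hA j hj, D_zero]

lemma bdd_pos {N : ℤ} {A : MDO} (hA : Bdd N A) : Bdd N (pos A) := by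
  intro j hj; show (if 0 < j then A j else 0) = 0
  rw [hA j hj]; simp

lemma bdd_nonneg {N : ℤ} {A : MDO} (hA : Bdd N A) : Bdd N (nonneg A) := by
  intro j hj; show (if 0 ≤ j then A j else 0) = 0
  rw [hA j hj]; simp

lemma bdd_npow {A : MDO} (hA : Bdd 1 A) (n : ℕ) : Bdd (n : ℤ) (npow A n) := by
  induction n with
  | zero => exact bdd_one
  | succ n ih =>
    have := hA.mul ih
    exact this.mono (by push_cast; omega)

lemma bdd_Bop {L : MDO} (hL : Bdd 1 L) (n : ℕ) : Bdd (n : ℤ) (Bop L n) :=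
  bdd_pos (bdd_npow hL n)

lemma bdd_possub (X : MDO) : Bdd 0 (pos X - X) := by
  intro j hj
  show pos X j - X j = 0
  rw [show pos X j = X j by simp [pos, hj]]
  simp

lemma bdd_Bc (L : MDO) (n : ℕ) : Bdd 0 (Bc L n) := bdd_possub _

lemma bdd_sub {N : ℤ} {A B : MDO} (hA : Bdd N A) (hB : Bdd N B) : Bdd N (A - B) := by
  intro j hj; show A j - B j = 0; rw [hA j hj, hB j hj, sub_zero]

lemma bdd_add {N : ℤ} {A B : MDO} (hA : Bdd N A) (hB : Bdd N B) : Bdd N (A + B) := by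
  intro j hj; show A j + B j = 0; rw [hA j hj, hB j hj, add_zero]

-- products with cOp on the left

lemma mul_cOp_left (f : Func) (B : MDO) : mul (cOp f) B = fun j => f * B j := by
  funext j
  rw [mul_eq_sum ({((0 : ℤ), (0 : ℕ))} : Finset (ℤ × ℕ))]
  · rw [Finset.sum_singleton]
    show gch 0 0 • (f * dxI 0 (B (j - 0 + 0))) = f * B j
    rw [gch_zero_right, one_smul, dxI_zero_fun]
    norm_num
  · rintro ⟨p1, p2⟩ hp
    rcases eq_or_ne p1 0 with h1 | h1
    · subst h1
      rcases Nat.eq_zero_or_pos p2 with h2 | h2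
      · exact absurd (by simp [h2]) hp
      · apply trm_zero_gch
        show gch 0 p2 = 0
        rw [gch_zero_left, if_neg (by omega)]
    · exact trm_zero_left (by simp [cOp, h1])

lemma cOp_one_eq : cOp (1 : Func) = one := rfl

lemma mul_one_left {B : MDO} : mul one B = B := by
  rw [← cOp_one_eq, mul_cOp_left]
  funext j; rw [one_mul]

lemma mul_cOp_cOp (f g : Func) : mul (cOp f) (cOp g) = cOp (f * g) := by
  rw [mul_cOp_left]
  funext j
  rcases eq_or_ne j 0 with h | h <;> simp [cOp, h]

-- products with cOp / del on the right

lemma mul_cOp_right {N : ℤ} {A : MDO} (hA : Bdd N A) (f : Func) (j : ℤ) :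
    mul A (cOp f) j = ∑ k ∈ Finset.range ((N - j).toNat + 1),
      gch (j + (k : ℤ)) k • (A (j + (k : ℤ)) * dxI k f) := by
  rw [mul_eq_sum (T := (Finset.range ((N - j).toNat + 1)).image (fun k : ℕ => ((j + (k : ℤ), k) : ℤ × ℕ)))]
  · rw [Finset.sum_image (by intro a _ b _ h; exact (Prod.mk.injEq _ _ _ _ ▸ h).2)]
    apply Finset.sum_congr rfl
    intro k _
    show gch (j + k) k • (A (j + k) * dxI k (cOp f (j - (j + (k:ℤ)) + (k:ℤ)))) = _
    rw [show j - (j + (k:ℤ)) + (k:ℤ) = 0 by ring]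
    rfl
  · rintro ⟨p1, p2⟩ hp
    rcases eq_or_ne p1 (j + (p2 : ℤ)) with h1 | h1
    · subst h1
      have hp2 : p2 ∉ Finset.range ((N - j).toNat + 1) := by
        intro hmem
        exact hp (Finset.mem_image_of_mem _ hmem)
      rw [Finset.mem_range, not_lt] at hp2
      apply trm_zero_left
      apply hA
      have h4 : N - j ≤ ((N - j).toNat : ℤ) := Int.self_le_toNat _
      have h5 : ((N - j).toNat : ℤ) + 1 ≤ (p2 : ℤ) := by exact_mod_cast hp2
      show N < j + (p2 : ℤ)
      omega
    · apply trm_zero_right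
      show cOp f (j - p1 + (p2:ℤ)) = 0
      simp only [cOp, ite_eq_right_iff]
      intro h0
      exact absurd (by omega : p1 = j + (p2:ℤ)) h1

lemma mul_one_right {N : ℤ} {A : MDO} (hA : Bdd N A) : mul A one = A := by
  funext j
  rw [← cOp_one_eq, mul_cOp_right hA]
  rw [Finset.sum_eq_single 0]
  · show gch (j + (0:ℤ)) 0 • (A (j + (0:ℤ)) * dxI 0 1) = A j
    rw [gch_zero_right, one_smul, dxI_zero_fun, mul_one]
    norm_num
  · intro k _ hk
    rw [dxI_one k (by omega), mul_zero, smul_zero]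
  · intro h
    exact absurd (Finset.mem_range.2 (by omega)) h

lemma mul_del_right {N : ℤ} {A : MDO} (hA : Bdd N A) : mul A del = fun j => A (j - 1) := by
  funext j
  rw [mul_eq_sum (T := (Finset.range ((N - (j-1)).toNat + 1)).image (fun k : ℕ => ((j - 1 + (k : ℤ), k) : ℤ × ℕ)))]
  · rw [Finset.sum_image (by intro a _ b _ h; exact (Prod.mk.injEq _ _ _ _ ▸ h).2)]
    rw [Finset.sum_eq_single 0]
    · show gch (j - 1 + (0:ℤ)) 0 • (A (j - 1 + (0:ℤ)) * dxI 0 (del (j - (j - 1 + (0:ℤ)) + (0:ℤ)))) = A (j - 1)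
      rw [show j - (j - 1 + (0:ℤ)) + (0:ℤ) = 1 by ring, gch_zero_right, one_smul, dxI_zero_fun]
      show A (j - 1 + 0) * (1 : Func) = A (j - 1)
      rw [mul_one]
      norm_num
    · intro k _ hk
      show gch (j - 1 + (k:ℤ)) k • (A (j - 1 + (k:ℤ)) * dxI k (del (j - (j - 1 + (k:ℤ)) + (k:ℤ)))) = 0
      rw [show j - (j - 1 + (k:ℤ)) + (k:ℤ) = 1 by ring]
      show _ • (_ * dxI k (1 : Func)) = 0
      rw [dxI_one k (by omega), mul_zero, smul_zero]
    · intro h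
      exact absurd (Finset.mem_range.2 (by omega)) h
  · rintro ⟨p1, p2⟩ hp
    rcases eq_or_ne p1 (j - 1 + (p2 : ℤ)) with h1 | h1
    · subst h1
      have hp2 : p2 ∉ Finset.range ((N - (j-1)).toNat + 1) := by
        intro hmem
        exact hp (Finset.mem_image_of_mem _ hmem)
      rw [Finset.mem_range, not_lt] at hp2
      apply trm_zero_left
      apply hA
      have h4 : N - (j-1) ≤ ((N - (j-1)).toNat : ℤ) := Int.self_le_toNat _
      have h5 : ((N - (j-1)).toNat : ℤ) + 1 ≤ (p2 : ℤ) := by exact_mod_cast hp2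
      show N < j - 1 + (p2 : ℤ)
      omega
    · apply trm_zero_right
      show del (j - p1 + (p2:ℤ)) = 0
      simp only [del, ite_eq_right_iff]
      intro h0
      exact absurd (by omega : p1 = j - 1 + (p2:ℤ)) h1


-- linearity of mul

lemma trm_add_left (A B C : MDO) (j : ℤ) (p : ℤ × ℕ) :
    trm (A + B) C j p = trm A C j p + trm B C j p := by
  show gch p.1 p.2 • ((A p.1 + B p.1) * _) = _
  rw [add_mul, smul_add]
  rfl

lemma trm_add_right (A B C : MDO) (j : ℤ) (p : ℤ × ℕ) :
    trm A (B + C) j p = trm A B j p + trm A C j p := by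
  show gch p.1 p.2 • (A p.1 * dxI p.2 (B _ + C _)) = _
  rw [dxI_addf, mul_add, smul_add]
  rfl

lemma trm_neg_left (A B : MDO) (j : ℤ) (p : ℤ × ℕ) : trm (-A) B j p = -trm A B j p := by
  show gch p.1 p.2 • ((-(A p.1)) * _) = _
  rw [neg_mul, smul_neg]
  rfl

lemma trm_neg_right (A B : MDO) (j : ℤ) (p : ℤ × ℕ) : trm A (-B) j p = -trm A B j p := by
  show gch p.1 p.2 • (A p.1 * dxI p.2 (-(B _))) = _
  rw [dxI_neg, mul_neg, smul_neg]
  rfl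

lemma bdd_neg {N : ℤ} {A : MDO} (hA : Bdd N A) : Bdd N (-A) := by
  intro j hj; show -(A j) = 0; rw [hA j hj, neg_zero]

lemma mul_add_left {NA NB NC : ℤ} {A B C : MDO} (hA : Bdd NA A) (hB : Bdd NB B) (hC : Bdd NC C) :
    mul (A + B) C = mul A C + mul B C := by
  funext j
  have hAB : Bdd (max NA NB) (A + B) := bdd_add (hA.mono (le_max_left _ _)) (hB.mono (le_max_right _ _))
  rw [show (mul A C + mul B C) j = mul A C j + mul B C j from rfl,
    mul_eq_sum_box hAB hC j, mul_eq_sum_box (hA.mono (le_max_left _ NB)) hC j,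
    mul_eq_sum_box (hB.mono (le_max_right NA _)) hC j, ← Finset.sum_add_distrib]
  exact Finset.sum_congr rfl fun p _ => trm_add_left A B C j p

lemma mul_add_right {NA NB NC : ℤ} {A B C : MDO} (hA : Bdd NA A) (hB : Bdd NB B) (hC : Bdd NC C) :
    mul A (B + C) = mul A B + mul A C := by
  funext j
  have hBC : Bdd (max NB NC) (B + C) := bdd_add (hB.mono (le_max_left _ _)) (hC.mono (le_max_right _ _))
  rw [show (mul A B + mul A C) j = mul A B j + mul A C j from rfl,
    mul_eq_sum_box hA hBC j, mul_eq_sum_box hA (hB.mono (le_max_left _ NC)) j,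
    mul_eq_sum_box hA (hC.mono (le_max_right NB _)) j, ← Finset.sum_add_distrib]
  exact Finset.sum_congr rfl fun p _ => trm_add_right A B C j p

lemma mul_neg_left (A B : MDO) : mul (-A) B = -(mul A B) := by
  funext j
  show ∑ᶠ p : ℤ × ℕ, trm (-A) B j p = -(∑ᶠ p : ℤ × ℕ, trm A B j p)
  rw [← finsum_neg_distrib]
  exact finsum_congr fun p => trm_neg_left A B j p

lemma mul_neg_right (A B : MDO) : mul A (-B) = -(mul A B) := by
  funext j
  show ∑ᶠ p : ℤ × ℕ, trm A (-B) j p = -(∑ᶠ p : ℤ × ℕ, trm A B j p)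
  rw [← finsum_neg_distrib]
  exact finsum_congr fun p => trm_neg_right A B j p

lemma mul_sub_left {NA NB NC : ℤ} {A B C : MDO} (hA : Bdd NA A) (hB : Bdd NB B) (hC : Bdd NC C) :
    mul (A - B) C = mul A C - mul B C := by
  rw [sub_eq_add_neg, sub_eq_add_neg, mul_add_left hA (bdd_neg hB) hC, mul_neg_left]

lemma mul_sub_right {NA NB NC : ℤ} {A B C : MDO} (hA : Bdd NA A) (hB : Bdd NB B) (hC : Bdd NC C) :
    mul A (B - C) = mul A B - mul A C := by
  rw [sub_eq_add_neg, sub_eq_add_neg, mul_add_right hA hB (bdd_neg hC), mul_neg_right]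

-- opD is a derivation

lemma opD_mul {NA NB : ℤ} {A B : MDO} (hA : Bdd NA A) (hB : Bdd NB B) (i : ℕ) :
    opD i (mul A B) = mul (opD i A) B + mul A (opD i B) := by
  funext j
  show D i (mul A B j) = mul (opD i A) B j + mul A (opD i B) j
  rw [mul_eq_sum_box hA hB j, mul_eq_sum_box (bdd_opD hA i) hB j,
    mul_eq_sum_box hA (bdd_opD hB i) j, D_sum, ← Finset.sum_add_distrib]
  apply Finset.sum_congr rfl
  intro p _
  show D i (gch p.1 p.2 • (A p.1 * dxI p.2 (B (j - p.1 + (p.2:ℤ))))) = _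
  rw [D_smul, D_mul, D_dxI]
  show gch p.1 p.2 • (D i (A p.1) * dxI p.2 (B (j - p.1 + (p.2:ℤ)))
        + A p.1 * dxI p.2 (D i (B (j - p.1 + (p.2:ℤ))))) = trm (opD i A) B j p + trm A (opD i B) j p
  rw [smul_add]
  rfl

lemma opD_add (i : ℕ) (A B : MDO) : opD i (A + B) = opD i A + opD i B := by
  funext j; exact D_add i (A j) (B j)

lemma opD_sub (i : ℕ) (A B : MDO) : opD i (A - B) = opD i A - opD i B := by
  funext j; exact D_sub i (A j) (B j)

lemma opD_cOp (i : ℕ) (f : Func) : opD i (cOp f) = cOp (D i f) := by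
  funext j
  show D i (if j = 0 then f else 0) = if j = 0 then D i f else 0
  rcases eq_or_ne j 0 with h | h <;> simp [h, D_zero]

-- multiplication by functions (gauge scalars)

lemma mul_fsmul_left {NA NB : ℤ} {A B : MDO} (hA : Bdd NA A) (hB : Bdd NB B) (g : Func) :
    mul (fun j => g * A j) B = fun j => g * mul A B j := by
  funext j
  have hgA : Bdd NA (fun j => g * A j) := by
    intro i hi; show g * A i = 0; rw [hA i hi, mul_zero]
  rw [mul_eq_sum_box hgA hB j, mul_eq_sum_box hA hB j, Finset.mul_sum]
  apply Finset.sum_congr rfl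
  intro p _
  show gch p.1 p.2 • ((g * A p.1) * dxI p.2 (B _)) = g * (gch p.1 p.2 • (A p.1 * dxI p.2 (B _)))
  rw [mul_assoc, mul_smul_comm]

-- nonnegative support

def LowBdd (A : MDO) : Prop := ∀ j, j < 0 → A j = 0

lemma lowBdd_mul_cOp {N : ℤ} {A : MDO} (hA : Bdd N A) (hlow : LowBdd A) (f : Func) :
    LowBdd (mul A (cOp f)) := by
  intro j hj
  rw [mul_cOp_right hA]
  apply Finset.sum_eq_zero
  intro k _
  rcases lt_or_ge (j + (k:ℤ)) 0 with h | h
  · rw [hlow _ h, zero_mul, smul_zero]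
  · rw [gch_eq_zero h (by omega), zero_smul]


-- Part 4 : associativity

lemma finsum_comp_inj {α β M : Type*} [AddCommMonoid M] (g : α → β) (hg : Function.Injective g)
    (f : β → M) (hf : ∀ b : β, b ∉ Set.range g → f b = 0) : ∑ᶠ b, f b = ∑ᶠ a, f (g a) := by
  rw [← finsum_mem_range (f := f) hg, ← finsum_mem_univ f]
  have h1 : Set.univ ∩ Function.support f = Set.range g ∩ Function.support f := by
    ext b
    constructor
    · rintro ⟨-, hb⟩
      refine ⟨?_, hb⟩
      by_contra hbr
      exact hb (hf b hbr)
    · rintro ⟨-, hb⟩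
      exact ⟨trivial, hb⟩
  rw [← finsum_mem_inter_support f Set.univ, h1, finsum_mem_inter_support]

lemma mul_eq_sum_box' {NA NB : ℤ} {A B : MDO} (hA : Bdd NA A) (hB : Bdd NB B)
    {lo j' : ℤ} (h : lo ≤ j') :
    mul A B j' = ∑ p ∈ box NA NB lo, trm A B j' p := by
  apply mul_eq_sum
  intro p hp
  by_cases h1 : NA < p.1
  · exact trm_zero_left (hA _ h1)
  push_neg at h1
  apply trm_zero_right
  apply hB
  by_contra hc
  push_neg at hc
  apply hp
  simp only [box, Finset.mem_product, Finset.mem_Icc, Finset.mem_range]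
  have h4 : NA + NB - lo ≤ ((NA + NB - lo).toNat : ℤ) := Int.self_le_toNat _
  refine ⟨⟨by omega, h1⟩, by omega⟩

section Assoc

variable (A B C : MDO) (j : ℤ)

/-- basic monomial `A_p ∂^a(B_q) ∂^c(C_{j-p+a-q+c})`. -/
def mono (p : ℤ) (a : ℕ) (q : ℤ) (c : ℕ) : Func :=
  A p * (dxI a (B q) * dxI c (C (j - p + (a : ℤ) - q + (c : ℤ))))

/-- normal form summand. -/
def Gfun (y : (ℤ × ℕ) × (ℤ × ℕ)) : Func :=
  (gch y.1.1 y.1.2 * gch (y.1.1 - (y.1.2 : ℤ) + y.2.1) y.2.2) •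
    mono A B C j y.1.1 y.1.2 y.2.1 y.2.2

/-- summand for `(A∘B)∘C`, index `((r,m),(p,a))`. -/
def HLfun (z : (ℤ × ℕ) × (ℤ × ℕ)) : Func :=
  (gch z.1.1 z.1.2 * gch z.2.1 z.2.2) •
    (A z.2.1 * (dxI z.2.2 (B (z.1.1 - z.2.1 + (z.2.2 : ℤ))) * dxI z.1.2 (C (j - z.1.1 + (z.1.2 : ℤ)))))

/-- summand for `A∘(B∘C)`, index `((p,k),(q,l),a)`. -/
def H1fun (w : ((ℤ × ℕ) × (ℤ × ℕ)) × ℕ) : Func :=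
  (gch w.1.1.1 w.1.1.2 * (gch w.1.2.1 w.1.2.2 * (w.1.1.2.choose w.2 : ℝ))) •
    (A w.1.1.1 * (dxI w.2 (B w.1.2.1) *
      dxI (w.1.1.2 - w.2 + w.1.2.2)
        (C (j - w.1.1.1 + (w.1.1.2 : ℤ) - w.1.2.1 + (w.1.2.2 : ℤ)))))

/-- regrouped summand, index `((p,a),(q,c),b)`. -/
def H3fun (w : ((ℤ × ℕ) × (ℤ × ℕ)) × ℕ) : Func :=
  if w.2 ≤ w.1.2.2 then
    (gch w.1.1.1 (w.1.1.2 + w.2) * gch w.1.2.1 (w.1.2.2 - w.2) *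
        (((w.1.1.2 + w.2).choose w.1.1.2 : ℕ) : ℝ)) •
      mono A B C j w.1.1.1 w.1.1.2 w.1.2.1 w.1.2.2
  else 0

lemma H3fun_apply (p : ℤ) (a : ℕ) (q : ℤ) (c b : ℕ) :
    H3fun A B C j (((p, a), (q, c)), b)
      = if b ≤ c then
          (gch p (a + b) * gch q (c - b) * (((a + b).choose a : ℕ) : ℝ)) •
            mono A B C j p a q c
        else 0 := rfl

variable {NA NB NC : ℤ} (hA : Bdd NA A) (hB : Bdd NB B) (hC : Bdd NC C)

lemma mono_zero_A {p : ℤ} {a : ℕ} {q : ℤ} {c : ℕ} (h : A p = 0) : mono A B C j p a q c = 0 := by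
  simp [mono, h]

lemma mono_zero_B {p : ℤ} {a : ℕ} {q : ℤ} {c : ℕ} (h : B q = 0) : mono A B C j p a q c = 0 := by
  simp [mono, h, dxI_zero]

lemma mono_zero_C {p : ℤ} {a : ℕ} {q : ℤ} {c : ℕ} (h : C (j - p + (a : ℤ) - q + (c : ℤ)) = 0) :
    mono A B C j p a q c = 0 := by
  simp [mono, h, dxI_zero]

def boxP : Finset (ℤ × ℕ) :=
  Finset.Icc (j - NB - NC) NA ×ˢ Finset.range ((NA + NB + NC - j).toNat + 1)

def boxQ : Finset (ℤ × ℕ) :=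
  Finset.Icc (j - NA - NC) NB ×ˢ Finset.range ((NA + NB + NC - j).toNat + 1)

include hA hB hC in
lemma mono_zero_cases {p : ℤ} {a : ℕ} {q : ℤ} {c : ℕ}
    (h : ¬ (p ∈ Finset.Icc (j - NB - NC) NA ∧ q ∈ Finset.Icc (j - NA - NC) NB ∧
      (a : ℤ) ≤ NA + NB + NC - j ∧ (c : ℤ) ≤ NA + NB + NC - j)) :
    mono A B C j p a q c = 0 := by
  by_cases h1 : NA < p
  · exact mono_zero_A A B C j (hA _ h1)
  by_cases h2 : NB < q
  · exact mono_zero_B A B C j (hB _ h2)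
  push_neg at h1 h2
  apply mono_zero_C
  apply hC
  simp only [Finset.mem_Icc, not_and_or, not_le] at h
  omega


include hA hB hC in
lemma Gfun_support : ∀ y : (ℤ × ℕ) × (ℤ × ℕ),
    y ∉ (boxP j (NA := NA) (NB := NB) (NC := NC)) ×ˢ (boxQ j (NA := NA) (NB := NB) (NC := NC)) →
    Gfun A B C j y = 0 := by
  rintro ⟨⟨p, a⟩, ⟨q, c⟩⟩ hy
  have hz : mono A B C j p a q c = 0 := by
    apply mono_zero_cases A B C j hA hB hC
    intro hcon
    apply hy
    simp only [boxP, boxQ, Finset.mem_product, Finset.mem_Icc, Finset.mem_range] at *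
    have h4 : NA + NB + NC - j ≤ ((NA + NB + NC - j).toNat : ℤ) := Int.self_le_toNat _
    obtain ⟨h1, h2, h3, h5⟩ := hcon
    exact ⟨⟨h1, by omega⟩, h2, by omega⟩
  show (_ : ℝ) • mono A B C j p a q c = 0
  rw [hz, smul_zero]

include hA hB hC in
lemma H3fun_support : ∀ w : ((ℤ × ℕ) × (ℤ × ℕ)) × ℕ,
    w ∉ ((boxP j (NA := NA) (NB := NB) (NC := NC)) ×ˢ (boxQ j (NA := NA) (NB := NB) (NC := NC)))
      ×ˢ Finset.range ((NA + NB + NC - j).toNat + 1) →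
    H3fun A B C j w = 0 := by
  rintro ⟨⟨⟨p, a⟩, ⟨q, c⟩⟩, b⟩ hw
  show H3fun A B C j ⟨⟨⟨p, a⟩, ⟨q, c⟩⟩, b⟩ = 0
  rw [H3fun]
  by_cases hbc : b ≤ c
  swap
  · rw [if_neg hbc]
  rw [if_pos hbc]
  have hz : mono A B C j p a q c = 0 := by
    apply mono_zero_cases A B C j hA hB hC
    intro hcon
    apply hw
    simp only [boxP, boxQ, Finset.mem_product, Finset.mem_Icc, Finset.mem_range] at *
    have h4 : NA + NB + NC - j ≤ ((NA + NB + NC - j).toNat : ℤ) := Int.self_le_toNat _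
    obtain ⟨h1, h2, h3, h5⟩ := hcon
    exact ⟨⟨⟨h1, by omega⟩, h2, by omega⟩, by omega⟩
  rw [hz, smul_zero]

include hA hB hC in
lemma HLfun_support : ∀ z : (ℤ × ℕ) × (ℤ × ℕ),
    z ∉ (box (NA + NB) NC j) ×ˢ (box NA NB (j - NC)) → HLfun A B C j z = 0 := by
  rintro ⟨⟨r, m⟩, ⟨p, a⟩⟩ hz
  show (_ : ℝ) • (A p * (dxI a (B (r - p + (a:ℤ))) * dxI m (C (j - r + (m:ℤ))))) = 0
  by_cases h1 : NA < p
  · rw [hA _ h1, zero_mul, smul_zero]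
  by_cases h2 : NB < r - p + (a:ℤ)
  · rw [hB _ h2, dxI_zero, zero_mul, mul_zero, smul_zero]
  by_cases h3 : NC < j - r + (m:ℤ)
  · rw [hC _ h3, dxI_zero, mul_zero, mul_zero, smul_zero]
  exfalso
  apply hz
  push_neg at h1 h2 h3
  simp only [box, Finset.mem_product, Finset.mem_Icc, Finset.mem_range]
  have h4 : NA + NB + NC - j ≤ ((NA + NB + NC - j).toNat : ℤ) := Int.self_le_toNat _
  have h5 : NA + NB - (j - NC) ≤ ((NA + NB - (j - NC)).toNat : ℤ) := Int.self_le_toNat _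
  exact ⟨⟨⟨by omega, by omega⟩, by omega⟩, ⟨by omega, by omega⟩, by omega⟩

include hA hB hC in
lemma assocL : mul (mul A B) C j = ∑ᶠ z : (ℤ × ℕ) × (ℤ × ℕ), HLfun A B C j z := by
  rw [mul_eq_sum_box (hA.mul hB) hC j]
  rw [(finsum_eq_sum_of_support_subset _ (s := (box (NA + NB) NC j) ×ˢ (box NA NB (j - NC)))
    (by
      intro z hzs
      by_contra hzT
      exact hzs (HLfun_support A B C j hA hB hC z hzT)))]
  rw [Finset.sum_product]
  apply Finset.sum_congr rfl
  rintro ⟨r, m⟩ hrm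
  simp only [box, Finset.mem_product, Finset.mem_Icc, Finset.mem_range] at hrm
  have hr : j - NC ≤ r := by
    have h4 : NA + NB + NC - j ≤ ((NA + NB + NC - j).toNat : ℤ) := Int.self_le_toNat _
    omega
  show trm (mul A B) C j (r, m) = _
  rw [trm]
  show gch r m • (mul A B r * dxI m (C (j - r + (m:ℤ)))) = _
  rw [mul_eq_sum_box' hA hB hr, Finset.sum_mul, Finset.smul_sum]
  apply Finset.sum_congr rfl
  rintro ⟨p, a⟩ hpa
  show gch r m • ((gch p a • (A p * dxI a (B (r - p + (a:ℤ))))) * dxI m (C (j - r + (m:ℤ)))) = _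
  rw [smul_mul_assoc, smul_smul, mul_assoc]
  rfl

lemma assocL2 : (∑ᶠ z : (ℤ × ℕ) × (ℤ × ℕ), HLfun A B C j z)
    = ∑ᶠ y : (ℤ × ℕ) × (ℤ × ℕ), Gfun A B C j y := by
  have hinj : Function.Injective
      (fun y : (ℤ × ℕ) × (ℤ × ℕ) => (((y.1.1 - (y.1.2:ℤ) + y.2.1, y.2.2), (y.1.1, y.1.2)) :
        (ℤ × ℕ) × (ℤ × ℕ))) := by
    rintro ⟨⟨p, a⟩, ⟨q, c⟩⟩ ⟨⟨p', a'⟩, ⟨q', c'⟩⟩ h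
    simp only [Prod.mk.injEq] at h
    obtain ⟨⟨h1, h2⟩, h3, h4⟩ := h
    subst h3; subst h4; subst h2
    have : q = q' := by omega
    subst this
    rfl
  rw [finsum_comp_inj _ hinj (HLfun A B C j)
    (by
      rintro ⟨⟨r, m⟩, ⟨p, a⟩⟩ hz
      exfalso
      apply hz
      refine ⟨((p, a), (r - p + (a:ℤ), m)), ?_⟩
      show ((p - (a:ℤ) + (r - p + (a:ℤ)), m), (p, a)) = ((r, m), (p, a))
      rw [show p - (a:ℤ) + (r - p + (a:ℤ)) = r by ring])]
  apply finsum_congr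
  rintro ⟨⟨p, a⟩, ⟨q, c⟩⟩
  show HLfun A B C j ((p - (a:ℤ) + q, c), (p, a)) = Gfun A B C j ((p, a), (q, c))
  rw [HLfun, Gfun]
  show (gch (p - (a:ℤ) + q) c * gch p a) •
      (A p * (dxI a (B ((p - (a:ℤ) + q) - p + (a:ℤ))) * dxI c (C (j - (p - (a:ℤ) + q) + (c:ℤ)))))
    = (gch p a * gch (p - (a:ℤ) + q) c) • mono A B C j p a q c
  rw [show (p - (a:ℤ) + q) - p + (a:ℤ) = q by ring,
    show j - (p - (a:ℤ) + q) + (c:ℤ) = j - p + (a:ℤ) - q + (c:ℤ) by ring, mul_comm]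
  rfl


include hA hB hC in
lemma H1fun_support : ∀ w : ((ℤ × ℕ) × (ℤ × ℕ)) × ℕ,
    w ∉ ((box NA (NB + NC) j) ×ˢ (box NB NC (j - NA))) ×ˢ
      Finset.range ((NA + NB + NC - j).toNat + 1) →
    H1fun A B C j w = 0 := by
  rintro ⟨⟨⟨p, k⟩, ⟨q, l⟩⟩, a⟩ hw
  show (gch p k * (gch q l * ((k.choose a : ℕ) : ℝ))) •
    (A p * (dxI a (B q) * dxI (k - a + l) (C (j - p + (k:ℤ) - q + (l:ℤ))))) = 0
  by_cases ha : k < a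
  · rw [Nat.choose_eq_zero_of_lt ha]
    norm_num
  push_neg at ha
  by_cases h1 : NA < p
  · rw [hA _ h1, zero_mul, smul_zero]
  by_cases h2 : NB < q
  · rw [hB _ h2, dxI_zero, zero_mul, mul_zero, smul_zero]
  by_cases h3 : NC < j - p + (k:ℤ) - q + (l:ℤ)
  · rw [hC _ h3, dxI_zero, mul_zero, mul_zero, smul_zero]
  exfalso
  apply hw
  push_neg at h1 h2 h3
  simp only [box, Finset.mem_product, Finset.mem_Icc, Finset.mem_range]
  have h4 : NA + NB + NC - j ≤ ((NA + NB + NC - j).toNat : ℤ) := Int.self_le_toNat _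
  have h5 : NB + NC - (j - NA) ≤ ((NB + NC - (j - NA)).toNat : ℤ) := Int.self_le_toNat _
  exact ⟨⟨⟨⟨by omega, h1⟩, by omega⟩, ⟨by omega, h2⟩, by omega⟩, by omega⟩

include hA hB hC in
lemma assocR : mul A (mul B C) j = ∑ᶠ w : ((ℤ × ℕ) × (ℤ × ℕ)) × ℕ, H1fun A B C j w := by
  rw [mul_eq_sum_box hA (hB.mul hC) j]
  rw [(finsum_eq_sum_of_support_subset _
        (s := ((box NA (NB + NC) j) ×ˢ (box NB NC (j - NA))) ×ˢ
          Finset.range ((NA + NB + NC - j).toNat + 1))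
    (by
      intro w hws
      by_contra hwT
      exact hws (H1fun_support A B C j hA hB hC w hwT)))]
  rw [Finset.sum_product, Finset.sum_product]
  apply Finset.sum_congr rfl
  rintro ⟨p, k⟩ hpk
  simp only [box, Finset.mem_product, Finset.mem_Icc, Finset.mem_range] at hpk
  have hple : j - NA ≤ j - p + (k:ℤ) := by omega
  have hkK : k + 1 ≤ (NA + NB + NC - j).toNat + 1 := by omega
  show trm A (mul B C) j (p, k) = _
  rw [trm]
  show gch p k • (A p * dxI k (mul B C (j - p + (k:ℤ)))) = _
  rw [mul_eq_sum_box' hB hC hple, dxI_sum, Finset.mul_sum, Finset.smul_sum]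
  apply Finset.sum_congr rfl
  rintro ⟨q, l⟩ hql
  show gch p k • (A p * dxI k (gch q l • (B q * dxI l (C ((j - p + (k:ℤ)) - q + (l:ℤ)))))) = _
  rw [dxI_smul, dxI_mul]
  have hstep : ∀ b ∈ Finset.range (k + 1),
      (k.choose b : ℝ) • (dxI b (B q) * dxI (k - b) (dxI l (C ((j - p + (k:ℤ)) - q + (l:ℤ)))))
        = (k.choose b : ℝ) • (dxI b (B q) * dxI (k - b + l) (C ((j - p + (k:ℤ)) - q + (l:ℤ)))) := by
    intro b _
    rw [← dxI_add_app]
  rw [Finset.sum_congr rfl hstep]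
  have hext : ∑ b ∈ Finset.range (k + 1),
      (k.choose b : ℝ) • (dxI b (B q) * dxI (k - b + l) (C ((j - p + (k:ℤ)) - q + (l:ℤ))))
      = ∑ b ∈ Finset.range ((NA + NB + NC - j).toNat + 1),
      (k.choose b : ℝ) • (dxI b (B q) * dxI (k - b + l) (C ((j - p + (k:ℤ)) - q + (l:ℤ)))) := by
    apply Finset.sum_subset
    · intro b hb
      rw [Finset.mem_range] at hb ⊢
      omega
    · intro b _ hb
      rw [Finset.mem_range, not_lt] at hb
      rw [Nat.choose_eq_zero_of_lt (by omega)]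
      norm_num
  rw [hext, Finset.smul_sum, Finset.mul_sum, Finset.smul_sum]
  apply Finset.sum_congr rfl
  intro a _
  rw [H1fun]
  show gch p k • (A p * (gch q l • ((k.choose a : ℝ) •
      (dxI a (B q) * dxI (k - a + l) (C ((j - p + (k:ℤ)) - q + (l:ℤ))))))) =
    (gch p k * (gch q l * ((k.choose a : ℕ) : ℝ))) •
      (A p * (dxI a (B q) * dxI (k - a + l) (C (j - p + (k:ℤ) - q + (l:ℤ)))))
  simp only [mul_smul_comm, smul_smul]

lemma assocR3 : (∑ᶠ w : ((ℤ × ℕ) × (ℤ × ℕ)) × ℕ, H1fun A B C j w)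
    = ∑ᶠ w : ((ℤ × ℕ) × (ℤ × ℕ)) × ℕ, H3fun A B C j w := by
  have hinj2 : Function.Injective
      (fun w : ((ℤ × ℕ) × (ℤ × ℕ)) × ℕ =>
        ((((w.1.1.1, w.1.1.2 + w.2), w.1.2), w.1.1.2) : ((ℤ × ℕ) × (ℤ × ℕ)) × ℕ)) := by
    rintro ⟨⟨⟨p, a⟩, ⟨q, l⟩⟩, b⟩ ⟨⟨⟨p', a'⟩, ⟨q', l'⟩⟩, b'⟩ h
    simp only [Prod.mk.injEq] at h
    obtain ⟨⟨⟨h1, h2⟩, h3, h3'⟩, h4⟩ := h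
    subst h1; subst h3; subst h3'; subst h4
    have : b = b' := by omega
    subst this
    rfl
  have hinj3 : Function.Injective
      (fun w : ((ℤ × ℕ) × (ℤ × ℕ)) × ℕ =>
        (((w.1.1, (w.1.2.1, w.2 + w.1.2.2)), w.2) : ((ℤ × ℕ) × (ℤ × ℕ)) × ℕ)) := by
    rintro ⟨⟨⟨p, a⟩, ⟨q, l⟩⟩, b⟩ ⟨⟨⟨p', a'⟩, ⟨q', l'⟩⟩, b'⟩ h
    simp only [Prod.mk.injEq] at h
    obtain ⟨⟨⟨h1, h2⟩, h3, h3'⟩, h4⟩ := h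
    subst h1; subst h2; subst h3; subst h4
    have : l = l' := by omega
    subst this
    rfl
  rw [finsum_comp_inj _ hinj2 (H1fun A B C j)
    (by
      rintro ⟨⟨⟨p, k⟩, ⟨q, l⟩⟩, a⟩ hw
      by_cases ha : a ≤ k
      · exfalso
        apply hw
        refine ⟨(((p, a), (q, l)), k - a), ?_⟩
        show (((p, a + (k - a)), (q, l)), a) = (((p, k), (q, l)), a)
        rw [show a + (k - a) = k by omega]
      · show (gch p k * (gch q l * ((k.choose a : ℕ) : ℝ))) • _ = 0
        rw [Nat.choose_eq_zero_of_lt (by omega)]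
        norm_num)]
  rw [finsum_comp_inj _ hinj3 (H3fun A B C j)
    (by
      rintro ⟨⟨⟨p, a⟩, ⟨q, c⟩⟩, b⟩ hw
      by_cases hb : b ≤ c
      · exfalso
        apply hw
        refine ⟨(((p, a), (q, c - b)), b), ?_⟩
        show (((p, a), (q, b + (c - b))), b) = (((p, a), (q, c)), b)
        rw [show b + (c - b) = c by omega]
      · show H3fun A B C j (((p, a), (q, c)), b) = 0
        rw [H3fun, if_neg hb])]
  apply finsum_congr
  rintro ⟨⟨⟨p, a⟩, ⟨q, l⟩⟩, b⟩
  show H1fun A B C j (((p, a + b), (q, l)), a) = H3fun A B C j (((p, a), (q, b + l)), b)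
  rw [H1fun, H3fun, if_pos (by omega : b ≤ b + l)]
  show (gch p (a + b) * (gch q l * (((a + b).choose a : ℕ) : ℝ))) •
      (A p * (dxI a (B q) * dxI (a + b - a + l) (C (j - p + ((a + b : ℕ):ℤ) - q + (l:ℤ)))))
    = (gch p (a + b) * gch q (b + l - b) * (((a + b).choose a : ℕ) : ℝ)) •
      mono A B C j p a q (b + l)
  rw [mono, show a + b - a + l = b + l by omega, show b + l - b = l by omega,
    show j - p + ((a + b : ℕ):ℤ) - q + (l:ℤ) = j - p + (a:ℤ) - q + ((b + l : ℕ):ℤ) by push_cast; ring]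
  congr 1
  ring

lemma scalar_vdm (p q : ℤ) (a c : ℕ) :
    ∑ b ∈ Finset.range (c + 1), gch p (a + b) * gch q (c - b) * (((a + b).choose a : ℕ) : ℝ)
      = gch p a * gch (p - (a:ℤ) + q) c := by
  have hterm : ∀ b ∈ Finset.range (c + 1),
      gch p (a + b) * gch q (c - b) * (((a + b).choose a : ℕ) : ℝ)
        = gch p a * (gch (p - (a:ℤ)) b * gch q (c - b)) := by
    intro b _
    rw [mul_right_comm, gch_trinom]
    ring
  rw [Finset.sum_congr rfl hterm, ← Finset.mul_sum, gch_vandermonde]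

include hA hB hC in
lemma assocR4 : (∑ᶠ w : ((ℤ × ℕ) × (ℤ × ℕ)) × ℕ, H3fun A B C j w)
    = ∑ᶠ y : (ℤ × ℕ) × (ℤ × ℕ), Gfun A B C j y := by
  rw [(finsum_eq_sum_of_support_subset _
        (s := ((boxP j (NA := NA) (NB := NB) (NC := NC)) ×ˢ
          (boxQ j (NA := NA) (NB := NB) (NC := NC))) ×ˢ
          Finset.range ((NA + NB + NC - j).toNat + 1))
    (by
      intro w hws
      by_contra hwT
      exact hws (H3fun_support A B C j hA hB hC w hwT)))]
  rw [(finsum_eq_sum_of_support_subset _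
        (s := (boxP j (NA := NA) (NB := NB) (NC := NC)) ×ˢ
          (boxQ j (NA := NA) (NB := NB) (NC := NC)))
    (by
      intro y hys
      by_contra hyT
      exact hys (Gfun_support A B C j hA hB hC y hyT)))]
  rw [Finset.sum_product]
  apply Finset.sum_congr rfl
  rintro ⟨⟨p, a⟩, ⟨q, c⟩⟩ hy
  simp only [boxP, boxQ, Finset.mem_product, Finset.mem_Icc, Finset.mem_range] at hy
  have hsub : ∑ b ∈ Finset.range ((NA + NB + NC - j).toNat + 1),
      H3fun A B C j (((p, a), (q, c)), b)
      = ∑ b ∈ Finset.range (c + 1), H3fun A B C j (((p, a), (q, c)), b) := by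
    refine (Finset.sum_subset ?_ ?_).symm
    · intro b hb
      rw [Finset.mem_range] at hb ⊢
      obtain ⟨-, -, hcK⟩ := hy
      omega
    · intro b _ hb
      rw [Finset.mem_range, not_lt] at hb
      show H3fun A B C j (((p, a), (q, c)), b) = 0
      rw [H3fun_apply, if_neg (by omega)]
  rw [hsub]
  have hterm : ∀ b ∈ Finset.range (c + 1),
      H3fun A B C j (((p, a), (q, c)), b)
        = (gch p (a + b) * gch q (c - b) * (((a + b).choose a : ℕ) : ℝ)) •
            mono A B C j p a q c := by
    intro b hb
    rw [Finset.mem_range] at hb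
    rw [H3fun_apply, if_pos (by omega)]
  rw [Finset.sum_congr rfl hterm, ← Finset.sum_smul, scalar_vdm]
  rfl

include hA hB hC in
theorem mul_assoc' : mul (mul A B) C = mul A (mul B C) := by
  funext j
  rw [assocL A B C j hA hB hC, assocL2 A B C j, assocR A B C j hA hB hC,
    assocR3 A B C j, assocR4 A B C j hA hB hC]

end Assoc


-- Part 5 : gauge lemmas

lemma cOp_mul_cOp_cancel {f g : Func} (h : f * g = 1) (X : MDO) :
    mul (cOp f) (mul (cOp g) X) = X := by
  rw [mul_cOp_left, mul_cOp_left]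
  funext j
  show f * (g * X j) = X j
  rw [← mul_assoc, h, one_mul]

lemma cOp_add (f g : Func) : cOp (f + g) = cOp f + cOp g := by
  funext j
  show (if j = 0 then f + g else 0) = (if j = 0 then f else 0) + (if j = 0 then g else 0)
  rcases eq_or_ne j 0 with h | h <;> simp [h]

lemma cOp_neg (f : Func) : cOp (-f) = -(cOp f) := by
  funext j
  show (if j = 0 then -f else 0) = -(if j = 0 then f else 0)
  rcases eq_or_ne j 0 with h | h <;> simp [h]

lemma sandwich2 {NA NB : ℤ} {A B : MDO} (hA : Bdd NA A) (hB : Bdd NB B)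
    (iu u v iv : Func) (hviv : v * iv = 1) :
    mul (cOp iu) (mul (mul A B) (cOp u))
      = mul (mul (cOp iu) (mul A (cOp v))) (mul (cOp iv) (mul B (cOp u))) := by
  have hAv : Bdd NA (mul A (cOp v)) := (hA.mul (bdd_cOp v)).mono (by omega)
  have hBu : Bdd NB (mul B (cOp u)) := (hB.mul (bdd_cOp u)).mono (by omega)
  have hivBu : Bdd NB (mul (cOp iv) (mul B (cOp u))) := ((bdd_cOp iv).mul hBu).mono (by omega)
  rw [mul_assoc' (cOp iu) (mul A (cOp v)) (mul (cOp iv) (mul B (cOp u))) (bdd_cOp iu) hAv hivBu]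
  refine congrArg (mul (cOp iu)) ?_
  rw [mul_assoc' A (cOp v) (mul (cOp iv) (mul B (cOp u))) hA (bdd_cOp v) hivBu,
    cOp_mul_cOp_cancel hviv]
  exact mul_assoc' A B (cOp u) hA hB (bdd_cOp u)

lemma sandwich1 {NA NB : ℤ} {A B : MDO} (hA : Bdd NA A) (hB : Bdd NB B)
    (iw w : Func) (hwiw : w * iw = 1) :
    mul (cOp iw) (mul (mul A B) (cOp w))
      = mul (mul (cOp iw) (mul A (cOp w))) (mul (cOp iw) (mul B (cOp w))) :=
  sandwich2 hA hB iw w w iw hwiw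

lemma npow_conj {A : MDO} (hA : Bdd 1 A) (w iw : Func) (h1 : iw * w = 1) (h2 : w * iw = 1) :
    ∀ n : ℕ, npow (mul (cOp iw) (mul A (cOp w))) n = mul (cOp iw) (mul (npow A n) (cOp w))
  | 0 => by
    show one = mul (cOp iw) (mul one (cOp w))
    rw [mul_one_left, mul_cOp_cOp, h1, cOp_one_eq]
  | n + 1 => by
    show mul (mul (cOp iw) (mul A (cOp w))) (npow (mul (cOp iw) (mul A (cOp w))) n)
      = mul (cOp iw) (mul (mul A (npow A n)) (cOp w))
    rw [npow_conj hA w iw h1 h2 n]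
    exact (sandwich1 hA (bdd_npow hA n) iw w h2).symm

lemma nonneg_eq_of_lowBdd {Y : MDO} (hY : LowBdd Y) : nonneg Y = Y := by
  funext j
  show (if 0 ≤ j then Y j else 0) = Y j
  rcases le_or_gt 0 j with h | h
  · rw [if_pos h]
  · rw [if_neg (by omega), hY j h]

lemma lowBdd_pos (X : MDO) : LowBdd (pos X) := by
  intro j hj
  show (if 0 < j then X j else 0) = 0
  rw [if_neg (by omega)]

lemma nonneg_add (X Y : MDO) : nonneg (X + Y) = nonneg X + nonneg Y := by
  funext j
  show (if 0 ≤ j then X j + Y j else 0) = (if 0 ≤ j then X j else 0) + (if 0 ≤ j then Y j else 0)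
  by_cases h : (0:ℤ) ≤ j <;> simp [h]

lemma nonneg_conj_split {X : MDO} {NX : ℤ} (hX0 : Bdd NX X) (w iw : Func)
    (h1 : iw * w = 1) :
    nonneg (mul (cOp iw) (mul X (cOp w)))
      = mul (cOp iw) (mul (pos X) (cOp w)) + cOp (X 0) := by
  set M := max NX 0 with hMdef
  have hX : Bdd M X := hX0.mono (le_max_left _ _)
  have hposBdd : Bdd M (pos X) := bdd_pos hX
  have hE : Bdd 0 (X - pos X) := by
    intro j hj
    show X j - pos X j = 0
    rw [sub_eq_zero]
    show X j = if 0 < j then X j else 0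
    rw [if_pos hj]
  have hEBdd : Bdd M (X - pos X) := hE.mono (le_max_right _ _)
  have hsplit : X = pos X + (X - pos X) := by
    funext j
    show X j = pos X j + (X j - pos X j)
    ring
  have hexp : mul (cOp iw) (mul X (cOp w))
      = mul (cOp iw) (mul (pos X) (cOp w)) + mul (cOp iw) (mul (X - pos X) (cOp w)) := by
    conv_lhs => rw [hsplit]
    rw [mul_add_left hposBdd hEBdd (bdd_cOp w), mul_cOp_left, mul_cOp_left, mul_cOp_left]
    funext j
    show iw * ((mul (pos X) (cOp w) + mul (X - pos X) (cOp w)) j) = _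
    show iw * (mul (pos X) (cOp w) j + mul (X - pos X) (cOp w) j) = _
    rw [mul_add]
    rfl
  rw [hexp, nonneg_add]
  congr 1
  · apply nonneg_eq_of_lowBdd
    have hlow1 : LowBdd (mul (pos X) (cOp w)) := lowBdd_mul_cOp hposBdd (lowBdd_pos X) w
    rw [mul_cOp_left]
    intro j hj
    show iw * (mul (pos X) (cOp w) j) = 0
    rw [hlow1 j hj, mul_zero]
  · funext j
    have hEw : Bdd 0 (mul (X - pos X) (cOp w)) := (hE.mul (bdd_cOp w)).mono (by omega)
    show (if 0 ≤ j then (mul (cOp iw) (mul (X - pos X) (cOp w))) j else 0)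
      = (if j = 0 then X 0 else 0)
    rcases lt_trichotomy j 0 with h | h | h
    · rw [if_neg (by omega), if_neg (by omega)]
    · subst h
      rw [if_pos le_rfl, if_pos rfl, mul_cOp_left]
      show iw * (mul (X - pos X) (cOp w) 0) = X 0
      rw [mul_cOp_right hE w 0]
      rw [show ((0:ℤ) - (0:ℤ)).toNat + 1 = 1 by norm_num, Finset.sum_range_one]
      show iw * (gch (0 + ((0:ℕ):ℤ)) 0 • ((X - pos X) (0 + ((0:ℕ):ℤ)) * dxI 0 w)) = X 0
      rw [show (0 + ((0:ℕ):ℤ)) = (0:ℤ) by norm_num, gch_zero_right, one_smul, dxI_zero_fun]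
      have hE0 : (X - pos X) 0 = X 0 := by
        show X 0 - pos X 0 = X 0
        show X 0 - (if (0:ℤ) < 0 then X 0 else 0) = X 0
        norm_num
      rw [hE0]
      calc iw * (X 0 * w) = (iw * w) * X 0 := by ring
        _ = X 0 := by rw [h1, one_mul]
    · rw [if_pos (by omega), if_neg (by omega), mul_cOp_left]
      show iw * (mul (X - pos X) (cOp w) j) = 0
      rw [hEw j h, mul_zero]

-- coefficient extraction

lemma DW_top {X W : MDO} {N : ℤ} (hX : Bdd 0 X) (hW : Bdd N W) :
    mul X W N = X 0 * W N := by
  rw [mul_eq_sum ({((0 : ℤ), (0 : ℕ))} : Finset (ℤ × ℕ))]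
  · rw [Finset.sum_singleton]
    show gch 0 0 • (X 0 * dxI 0 (W (N - 0 + ((0:ℕ):ℤ)))) = X 0 * W N
    rw [gch_zero_right, one_smul, dxI_zero_fun, show N - 0 + ((0:ℕ):ℤ) = N by norm_num]
  · rintro ⟨p1, p2⟩ hp
    rcases lt_or_ge (0:ℤ) p1 with h1 | h1
    · exact trm_zero_left (hX _ h1)
    · rcases eq_or_ne (p1, p2) ((0:ℤ), (0:ℕ)) with he | he
      · exact absurd (by rw [he]; exact Finset.mem_singleton_self _) hp
      · apply trm_zero_right
        apply hW
        show N < N - p1 + (p2:ℤ)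
        rcases eq_or_ne p1 0 with h2 | h2
        · subst h2
          have : p2 ≠ 0 := by
            intro h3
            exact he (by rw [h3])
          omega
        · have hp2 : (0:ℤ) ≤ (p2:ℤ) := by positivity
          omega

lemma PW_top {P W : MDO} {N M : ℤ} (hP : Bdd M P) (hW : Bdd N W) :
    mul P W (N + M) = P M * W N := by
  rw [mul_eq_sum ({((M : ℤ), (0 : ℕ))} : Finset (ℤ × ℕ))]
  · rw [Finset.sum_singleton]
    show gch M 0 • (P M * dxI 0 (W (N + M - M + ((0:ℕ):ℤ)))) = P M * W N
    rw [gch_zero_right, one_smul, dxI_zero_fun, show N + M - M + ((0:ℕ):ℤ) = N by ring]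
  · rintro ⟨p1, p2⟩ hp
    rcases lt_or_ge M p1 with h1 | h1
    · exact trm_zero_left (hP _ h1)
    · rcases eq_or_ne (p1, p2) ((M : ℤ), (0:ℕ)) with he | he
      · exact absurd (by rw [he]; exact Finset.mem_singleton_self _) hp
      · apply trm_zero_right
        apply hW
        show N < N + M - p1 + (p2:ℤ)
        rcases eq_or_ne p1 M with h2 | h2
        · subst h2
          have : p2 ≠ 0 := by
            intro h3
            exact he (by rw [h3])
          omega
        · have hp2 : (0:ℤ) ≤ (p2:ℤ) := by positivity
          omega

lemma LW_coeff {L W : MDO} {N : ℤ} (hL1 : L 1 = 1) (hLbdd : Bdd 1 L)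
    (hW : Bdd N W) (heq : mul L W = mul W del) : L 0 * W N + dx (W N) = 0 := by
  have hWd := congrFun (mul_del_right hW) N
  have hc := congrFun heq N
  rw [hWd] at hc
  -- compute mul L W N over {(0,0),(1,0),(1,1)}
  rw [mul_eq_sum ({((0:ℤ),(0:ℕ)), ((1:ℤ),(0:ℕ)), ((1:ℤ),(1:ℕ))} : Finset (ℤ × ℕ))] at hc
  · rw [show ({((0:ℤ),(0:ℕ)), ((1:ℤ),(0:ℕ)), ((1:ℤ),(1:ℕ))} : Finset (ℤ × ℕ))
        = insert ((0:ℤ),(0:ℕ)) (insert ((1:ℤ),(0:ℕ)) {((1:ℤ),(1:ℕ))}) from rfl,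
      Finset.sum_insert (by decide), Finset.sum_insert (by decide),
      Finset.sum_singleton] at hc
    have e1 : trm L W N ((0:ℤ),(0:ℕ)) = L 0 * W N := by
      show gch 0 0 • (L 0 * dxI 0 (W (N - 0 + ((0:ℕ):ℤ)))) = L 0 * W N
      rw [gch_zero_right, one_smul, dxI_zero_fun, show N - 0 + ((0:ℕ):ℤ) = N by norm_num]
    have e2 : trm L W N ((1:ℤ),(0:ℕ)) = W (N - 1) := by
      show gch 1 0 • (L 1 * dxI 0 (W (N - 1 + ((0:ℕ):ℤ)))) = W (N - 1)
      rw [gch_zero_right, one_smul, dxI_zero_fun, hL1,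
        show N - 1 + ((0:ℕ):ℤ) = N - 1 by norm_num, one_mul]
    have e3 : trm L W N ((1:ℤ),(1:ℕ)) = dx (W N) := by
      show gch 1 1 • (L 1 * dxI 1 (W (N - 1 + ((1:ℕ):ℤ)))) = dx (W N)
      rw [gch_one_one, one_smul, hL1, dxI_one_fun,
        show N - 1 + ((1:ℕ):ℤ) = N by norm_num, one_mul]
    rw [e1, e2, e3] at hc
    linear_combination hc
  · rintro ⟨p1, p2⟩ hp
    rcases lt_or_ge (1:ℤ) p1 with h1 | h1
    · exact trm_zero_left (hLbdd _ h1)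
    · by_cases h2 : (p1:ℤ) < (p2:ℤ)
      · exact trm_zero_right (hW _ (by omega))
      · exfalso
        apply hp
        have hp2 : (0:ℤ) ≤ (p2:ℤ) := by positivity
        have : (p1 = 0 ∧ p2 = 0) ∨ (p1 = 1 ∧ p2 = 0) ∨ (p1 = 1 ∧ p2 = 1) := by omega
        simp only [Finset.mem_insert, Finset.mem_singleton]
        rcases this with ⟨ha, hb⟩ | ⟨ha, hb⟩ | ⟨ha, hb⟩ <;> subst ha <;> subst hb <;> simp


lemma mul_cOp_left_add (f : Func) (X Y : MDO) :
    mul (cOp f) (X + Y) = mul (cOp f) X + mul (cOp f) Y := by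
  rw [mul_cOp_left, mul_cOp_left, mul_cOp_left]
  funext j
  show f * (X j + Y j) = f * X j + f * Y j
  ring

lemma mul_cOp_left_sub (f : Func) (X Y : MDO) :
    mul (cOp f) (X - Y) = mul (cOp f) X - mul (cOp f) Y := by
  rw [mul_cOp_left, mul_cOp_left, mul_cOp_left]
  funext j
  show f * (X j - Y j) = f * X j - f * Y j
  ring

lemma mul_zero_left (B : MDO) : mul (0 : MDO) B = 0 := by
  funext j
  show ∑ᶠ p : ℤ × ℕ, trm 0 B j p = 0
  rw [finsum_congr (fun p => trm_zero_left (rfl : (0 : MDO) p.1 = 0)), finsum_zero]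

lemma mul_zero_right (A : MDO) : mul A (0 : MDO) = 0 := by
  funext j
  show ∑ᶠ p : ℤ × ℕ, trm A 0 j p = 0
  rw [finsum_congr (fun p => trm_zero_right (rfl : (0 : MDO) (j - p.1 + (p.2:ℤ)) = 0)), finsum_zero]

lemma cOp_zero : cOp (0 : Func) = 0 := by
  funext j
  show (if j = 0 then (0:Func) else 0) = 0
  rcases eq_or_ne j 0 with h | h <;> simp [h]

lemma mul_cOp_right_high {M : ℤ} {A : MDO} (hA : Bdd M A) (f : Func) {j : ℤ} (hj : M < j) :
    mul A (cOp f) j = 0 :=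
  ((hA.mul (bdd_cOp f)).mono (by omega)) j hj

lemma mul_cOp_right_top {M : ℤ} {A : MDO} (hA : Bdd M A) (f : Func) :
    mul A (cOp f) M = A M * f := by
  rw [mul_cOp_right hA f M, show (M - M).toNat + 1 = 1 by simp, Finset.sum_range_one]
  show gch (M + ((0:ℕ):ℤ)) 0 • (A (M + ((0:ℕ):ℤ)) * dxI 0 f) = A M * f
  rw [gch_zero_right, one_smul, dxI_zero_fun, show M + ((0:ℕ):ℤ) = M by norm_num]

lemma mul_cOp_right_second {A : MDO} (hA : Bdd 1 A) (f : Func) :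
    mul A (cOp f) 0 = A 0 * f + A 1 * dx f := by
  rw [mul_cOp_right hA f 0, show ((1:ℤ) - 0).toNat + 1 = 2 by norm_num]
  rw [show (2:ℕ) = 1 + 1 from rfl, Finset.sum_range_succ, Finset.sum_range_one]
  congr 1
  · show gch (0 + ((0:ℕ):ℤ)) 0 • (A (0 + ((0:ℕ):ℤ)) * dxI 0 f) = A 0 * f
    rw [gch_zero_right, one_smul, dxI_zero_fun, show (0:ℤ) + ((0:ℕ):ℤ) = 0 by norm_num]
  · show gch (0 + ((1:ℕ):ℤ)) 1 • (A (0 + ((1:ℕ):ℤ)) * dxI 1 f) = A 1 * dx f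
    rw [show (0:ℤ) + ((1:ℕ):ℤ) = 1 by norm_num, gch_one_one, one_smul, dxI_one_fun]

lemma mul_cOp_right_neg {M : ℤ} {A : MDO} (hA : Bdd M A) (hlow : ∀ i, i ≤ 0 → A i = 0)
    (f : Func) {j : ℤ} (hj : j < 0) : mul A (cOp f) j = 0 := by
  rw [mul_cOp_right hA f j]
  apply Finset.sum_eq_zero
  intro k _
  rcases le_or_gt (j + (k:ℤ)) 0 with h | h
  · rw [hlow _ h, zero_mul, smul_zero]
  · rw [gch_eq_zero (by omega) (by omega), zero_smul]

lemma D_inverse {w : Func} (hw : IsUnit w) (n : ℕ) {γ : Func} (hD : D n w = γ * w) :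
    D n (Ring.inverse w) = -γ * Ring.inverse w := by
  have h1 : Ring.inverse w * w = 1 := Ring.inverse_mul_cancel w hw
  have h0 : D n (Ring.inverse w) * w + Ring.inverse w * D n w = 0 := by
    rw [← D_mul, h1, D_one]
  linear_combination (Ring.inverse w) * h0 - (Ring.inverse w)^2 * hD
    - (D n (Ring.inverse w) + γ * Ring.inverse w) * h1

lemma gauge_deriv {A Q1 Q0 : MDO} {NA NQ1 NQ0 : ℤ}
    (hA : Bdd NA A) (hQ1 : Bdd NQ1 Q1) (hQ0 : Bdd NQ0 Q0)
    {w0 iw0 w1 iw1 : Func}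
    (h20 : w0 * iw0 = 1) (h21 : w1 * iw1 = 1)
    {n : ℕ} {γ1 γ0 : Func}
    (hDw0 : D n w0 = γ0 * w0) (hDiw1 : D n iw1 = -γ1 * iw1)
    (heq : opD n A = mul Q1 A - mul A Q0) :
    opD n (mul (cOp iw1) (mul A (cOp w0)))
      = mul (mul (cOp iw1) (mul Q1 (cOp w1)) + cOp (-γ1)) (mul (cOp iw1) (mul A (cOp w0)))
        - mul (mul (cOp iw1) (mul A (cOp w0))) (mul (cOp iw0) (mul Q0 (cOp w0)) + cOp (-γ0)) := by
  have hAc : Bdd NA (mul A (cOp w0)) := (hA.mul (bdd_cOp _)).mono (by omega)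
  have hAm : Bdd NA (mul (cOp iw1) (mul A (cOp w0))) := ((bdd_cOp _).mul hAc).mono (by omega)
  have hQ1m : Bdd NQ1 (mul (cOp iw1) (mul Q1 (cOp w1))) :=
    ((bdd_cOp iw1).mul ((hQ1.mul (bdd_cOp w1)).mono (add_zero NQ1).le)).mono (zero_add NQ1).le
  have hQ0m : Bdd NQ0 (mul (cOp iw0) (mul Q0 (cOp w0))) :=
    ((bdd_cOp iw0).mul ((hQ0.mul (bdd_cOp w0)).mono (add_zero NQ0).le)).mono (zero_add NQ0).le
  rw [opD_mul (bdd_cOp iw1) hAc n, opD_cOp, hDiw1,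
    opD_mul hA (bdd_cOp w0) n, opD_cOp, hDw0, heq]
  have t1 : mul (cOp (-γ1 * iw1)) (mul A (cOp w0))
      = mul (cOp (-γ1)) (mul (cOp iw1) (mul A (cOp w0))) := by
    rw [← mul_cOp_cOp,
      mul_assoc' (cOp (-γ1)) (cOp iw1) (mul A (cOp w0)) (bdd_cOp _) (bdd_cOp _) hAc]
  have t3 : mul A (cOp (γ0 * w0)) = mul (mul A (cOp w0)) (cOp γ0) := by
    rw [mul_assoc' A (cOp w0) (cOp γ0) hA (bdd_cOp _) (bdd_cOp _), mul_cOp_cOp, mul_comm w0 γ0]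
  have s1 : mul (cOp iw1) (mul (mul Q1 A) (cOp w0))
      = mul (mul (cOp iw1) (mul Q1 (cOp w1))) (mul (cOp iw1) (mul A (cOp w0))) :=
    sandwich2 hQ1 hA iw1 w0 w1 iw1 h21
  have s0 : mul (cOp iw1) (mul (mul A Q0) (cOp w0))
      = mul (mul (cOp iw1) (mul A (cOp w0))) (mul (cOp iw0) (mul Q0 (cOp w0))) :=
    sandwich2 hA hQ0 iw1 w0 w0 iw0 h20
  have mid : mul (mul Q1 A - mul A Q0) (cOp w0)
      = mul (mul Q1 A) (cOp w0) - mul (mul A Q0) (cOp w0) :=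
    mul_sub_left (hQ1.mul hA) (hA.mul hQ0) (bdd_cOp w0)
  have msub : ∀ X Y : MDO, mul (cOp iw1) (X - Y) = mul (cOp iw1) X - mul (cOp iw1) Y := by
    intro X Y
    rw [mul_cOp_left, mul_cOp_left, mul_cOp_left]
    funext j
    show iw1 * (X j - Y j) = iw1 * X j - iw1 * Y j
    ring
  rw [mul_cOp_left_add, mid, msub, s1, s0, t1]
  have t3' : mul (cOp iw1) (mul A (cOp (γ0 * w0)))
      = mul (mul (cOp iw1) (mul A (cOp w0))) (cOp γ0) := by
    rw [t3, mul_assoc' (cOp iw1) (mul A (cOp w0)) (cOp γ0) (bdd_cOp _) hAc (bdd_cOp _)]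
  rw [t3']
  rw [mul_add_left hQ1m (bdd_cOp _) hAm, mul_add_right hAm hQ0m (bdd_cOp _)]
  rw [cOp_neg γ0, mul_neg_right]
  abel


/-- if `(L(s), P(s))_{s∈S}` is a solution of the cmKP hierarchy
with dressing operator `W(s)` with leading coefficient `w₀(s)`, then
`L^mkp(s) = w₀(s)⁻¹ L(s) w₀(s)`, `P^mkp(s) = w₀(s+1)⁻¹ P(s) w₀(s)` is a
solution of the mKP hierarchy and `W^mkp(s) = w₀(s)⁻¹ W(s)` is its dressing
operator. -/
theorem cmkp_to_mkp_gauge (S : Set ℤ) (nn : ℤ → ℤ) (L P W : ℤ → MDO)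
    (hsol : CmKPSol S nn L P) (hdress : CmKPDress S nn L P W) :
    MkpSol S nn
      (fun s => mul (cOp (Ring.inverse (W s (nn s)))) (mul (L s) (cOp (W s (nn s)))))
      (fun s => mul (cOp (Ring.inverse (W (s + 1) (nn (s + 1)))))
        (mul (P s) (cOp (W s (nn s))))) ∧
    MkpDress S nn
      (fun s => mul (cOp (Ring.inverse (W s (nn s)))) (mul (L s) (cOp (W s (nn s)))))
      (fun s => mul (cOp (Ring.inverse (W (s + 1) (nn (s + 1)))))
        (mul (P s) (cOp (W s (nn s)))))
      (fun s => mul (cOp (Ring.inverse (W s (nn s)))) (W s)) := by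
  classical
  obtain ⟨hconsec, hmono, hLs, hPhigh, hPlow, hP0, hlax, hinter, hevol⟩ := hsol
  obtain ⟨hform, hw0, hLWd, hPWd, hDWd⟩ := hdress
  have hwu : ∀ s, s ∈ S → Ring.inverse (W s (nn s)) * W s (nn s) = 1 :=
    fun s hs => Ring.inverse_mul_cancel _ (hw0 s hs)
  have hwu' : ∀ s, s ∈ S → W s (nn s) * Ring.inverse (W s (nn s)) = 1 :=
    fun s hs => Ring.mul_inverse_cancel _ (hw0 s hs)
  have hLbdd : ∀ s, s ∈ S → Bdd 1 (L s) := fun s hs j hj => (hLs s hs).2 j hj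
  have hL1 : ∀ s, s ∈ S → L s 1 = 1 := fun s hs => (hLs s hs).1
  have hWbdd : ∀ s, s ∈ S → Bdd (nn s) (W s) := fun s hs j hj => hform s hs j hj
  have hPbdd : ∀ s, s ∈ S → s + 1 ∈ S → Bdd (nn (s + 1) - nn s) (P s) :=
    fun s hs hs1 j hj => hPhigh s hs hs1 j hj
  have keyL : ∀ s, s ∈ S → L s 0 * W s (nn s) + dx (W s (nn s)) = 0 :=
    fun s hs => LW_coeff (hL1 s hs) (hLbdd s hs) (hWbdd s hs) (hLWd s hs)
  have keyD : ∀ s, s ∈ S → ∀ n : ℕ, 1 ≤ n →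
      D n (W s (nn s)) = Bc (L s) n 0 * W s (nn s) := by
    intro s hs n hn
    have h := congrFun (hDWd s hs n hn) (nn s)
    rw [DW_top (bdd_Bc (L s) n) (hWbdd s hs)] at h
    exact h
  have keyDi : ∀ s, s ∈ S → ∀ n : ℕ, 1 ≤ n →
      D n (Ring.inverse (W s (nn s))) = -(Bc (L s) n 0) * Ring.inverse (W s (nn s)) :=
    fun s hs n hn => D_inverse (hw0 s hs) n (keyD s hs n hn)
  have keyP : ∀ s, s ∈ S → s + 1 ∈ S →
      P s (nn (s + 1) - nn s) * W s (nn s) = W (s + 1) (nn (s + 1)) := by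
    intro s hs hs1
    have h := congrFun (hPWd s hs hs1) (nn (s + 1))
    have h2 := PW_top (hPbdd s hs hs1) (hWbdd s hs)
    rw [show nn s + (nn (s + 1) - nn s) = nn (s + 1) by ring] at h2
    rw [h2] at h
    exact h
  have hnp : ∀ s, s ∈ S → ∀ n : ℕ,
      npow (mul (cOp (Ring.inverse (W s (nn s)))) (mul (L s) (cOp (W s (nn s))))) n
        = mul (cOp (Ring.inverse (W s (nn s)))) (mul (npow (L s) n) (cOp (W s (nn s)))) :=
    fun s hs n => npow_conj (hLbdd s hs) _ _ (hwu s hs) (hwu' s hs) n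
  have hBmkp : ∀ s, s ∈ S → ∀ n : ℕ,
      Bmkp (mul (cOp (Ring.inverse (W s (nn s)))) (mul (L s) (cOp (W s (nn s))))) n
        = mul (cOp (Ring.inverse (W s (nn s)))) (mul (Bop (L s) n) (cOp (W s (nn s))))
          + cOp (npow (L s) n 0) := by
    intro s hs n
    show nonneg _ = _
    rw [hnp s hs n, nonneg_conj_split (bdd_npow (hLbdd s hs) n) _ _ (hwu s hs)]
    rfl
  have hgam : ∀ s : ℤ, ∀ n : ℕ, -(Bc (L s) n 0) = npow (L s) n 0 := by
    intro s n
    show -(pos (npow (L s) n) 0 - npow (L s) n 0) = npow (L s) n 0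
    show -((if (0:ℤ) < 0 then npow (L s) n 0 else 0) - npow (L s) n 0) = npow (L s) n 0
    norm_num
  refine ⟨⟨hconsec, hmono, ?_, ?_, ?_, ?_, ?_, ?_, ?_⟩, ⟨?_, ?_, ?_, ?_, ?_⟩⟩
  · -- hL : IsLmkp
    intro s hs
    have hc := mul_cOp_left (Ring.inverse (W s (nn s))) (mul (L s) (cOp (W s (nn s))))
    refine ⟨?_, ?_, ?_⟩
    · show mul (cOp (Ring.inverse (W s (nn s)))) (mul (L s) (cOp (W s (nn s)))) 1 = 1
      rw [congrFun hc 1, mul_cOp_right_top (hLbdd s hs), hL1 s hs, one_mul]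
      exact hwu s hs
    · show mul (cOp (Ring.inverse (W s (nn s)))) (mul (L s) (cOp (W s (nn s)))) 0 = 0
      rw [congrFun hc 0, mul_cOp_right_second (hLbdd s hs), hL1 s hs, one_mul,
        show dx (W s (nn s)) = dxI 1 (W s (nn s)) from rfl]
      rw [show dxI 1 (W s (nn s)) = dx (W s (nn s)) from rfl, keyL s hs, mul_zero]
    · intro jj hjj
      show mul (cOp (Ring.inverse (W s (nn s)))) (mul (L s) (cOp (W s (nn s)))) jj = 0
      rw [congrFun hc jj, mul_cOp_right_high (hLbdd s hs) _ hjj, mul_zero]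
  · -- hPhigh
    intro s hs hs1 jj hjj
    show mul (cOp (Ring.inverse (W (s + 1) (nn (s + 1))))) (mul (P s) (cOp (W s (nn s)))) jj = 0
    rw [congrFun (mul_cOp_left _ _) jj, mul_cOp_right_high (hPbdd s hs hs1) _ hjj, mul_zero]
  · -- hPlow
    intro s hs hs1 jj hjj
    show mul (cOp (Ring.inverse (W (s + 1) (nn (s + 1))))) (mul (P s) (cOp (W s (nn s)))) jj = 0
    rw [congrFun (mul_cOp_left _ _) jj,
      mul_cOp_right_neg (hPbdd s hs hs1) (fun i hi => hPlow s hs hs1 i hi) _ hjj, mul_zero]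
  · -- hPmonic
    intro s hs hs1
    show mul (cOp (Ring.inverse (W (s + 1) (nn (s + 1)))))
      (mul (P s) (cOp (W s (nn s)))) (nn (s + 1) - nn s) = 1
    rw [congrFun (mul_cOp_left _ _) (nn (s + 1) - nn s),
      mul_cOp_right_top (hPbdd s hs hs1), keyP s hs hs1]
    exact hwu (s + 1) hs1
  · -- lax
    intro s hs n hn
    beta_reduce
    have heq : opD n (L s) = mul (Bop (L s) n) (L s) - mul (L s) (Bop (L s) n) :=
      hlax s hs n hn
    have hgd := gauge_deriv (hLbdd s hs) (bdd_Bop (hLbdd s hs) n) (bdd_Bop (hLbdd s hs) n)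
      (hwu' s hs) (hwu' s hs) (keyD s hs n hn) (keyDi s hs n hn) heq
    rw [hgd, hgam s n, ← hBmkp s hs n]
    rfl
  · -- inter
    intro s hs hs1
    beta_reduce
    rw [← sandwich2 (hLbdd (s + 1) hs1) (hPbdd s hs hs1) (Ring.inverse (W (s + 1) (nn (s + 1))))
        (W s (nn s)) (W (s + 1) (nn (s + 1))) (Ring.inverse (W (s + 1) (nn (s + 1))))
        (hwu' (s + 1) hs1),
      ← sandwich2 (hPbdd s hs hs1) (hLbdd s hs) (Ring.inverse (W (s + 1) (nn (s + 1))))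
        (W s (nn s)) (W s (nn s)) (Ring.inverse (W s (nn s))) (hwu' s hs),
      hinter s hs hs1]
  · -- evol
    intro s hs hs1 n hn
    beta_reduce
    have hgd := gauge_deriv (hPbdd s hs hs1) (bdd_Bop (hLbdd (s + 1) hs1) n)
      (bdd_Bop (hLbdd s hs) n) (hwu' s hs) (hwu' (s + 1) hs1)
      (keyD s hs n hn) (keyDi (s + 1) hs1 n hn) (hevol s hs hs1 n hn)
    rw [hgd, hgam (s + 1) n, hgam s n, ← hBmkp s hs n, ← hBmkp (s + 1) hs1 n]
  · -- hform
    intro s hs jj hjj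
    show mul (cOp (Ring.inverse (W s (nn s)))) (W s) jj = 0
    rw [congrFun (mul_cOp_left _ (W s)) jj, hWbdd s hs jj hjj, mul_zero]
  · -- htop
    intro s hs
    show mul (cOp (Ring.inverse (W s (nn s)))) (W s) (nn s) = 1
    rw [congrFun (mul_cOp_left _ (W s)) (nn s)]
    exact hwu s hs
  · -- hLW
    intro s hs
    beta_reduce
    have hWm : Bdd (nn s) (mul (cOp (Ring.inverse (W s (nn s)))) (W s)) :=
      ((bdd_cOp _).mul (hWbdd s hs)).mono (zero_add _).le
    have hLc : Bdd 1 (mul (L s) (cOp (W s (nn s)))) :=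
      ((hLbdd s hs).mul (bdd_cOp _)).mono (add_zero 1).le
    rw [mul_assoc' (cOp (Ring.inverse (W s (nn s)))) (mul (L s) (cOp (W s (nn s))))
        (mul (cOp (Ring.inverse (W s (nn s)))) (W s)) (bdd_cOp _) hLc hWm,
      mul_assoc' (L s) (cOp (W s (nn s))) (mul (cOp (Ring.inverse (W s (nn s)))) (W s))
        (hLbdd s hs) (bdd_cOp _) hWm,
      cOp_mul_cOp_cancel (hwu' s hs), hLWd s hs,
      ← mul_assoc' (cOp (Ring.inverse (W s (nn s)))) (W s) del (bdd_cOp _) (hWbdd s hs) bdd_del]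
  · -- hPW
    intro s hs hs1
    beta_reduce
    have hWm : Bdd (nn s) (mul (cOp (Ring.inverse (W s (nn s)))) (W s)) :=
      ((bdd_cOp _).mul (hWbdd s hs)).mono (zero_add _).le
    have hPc : Bdd (nn (s + 1) - nn s) (mul (P s) (cOp (W s (nn s)))) :=
      ((hPbdd s hs hs1).mul (bdd_cOp _)).mono (add_zero _).le
    rw [mul_assoc' (cOp (Ring.inverse (W (s + 1) (nn (s + 1))))) (mul (P s) (cOp (W s (nn s))))
        (mul (cOp (Ring.inverse (W s (nn s)))) (W s)) (bdd_cOp _) hPc hWm,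
      mul_assoc' (P s) (cOp (W s (nn s))) (mul (cOp (Ring.inverse (W s (nn s)))) (W s))
        (hPbdd s hs hs1) (bdd_cOp _) hWm,
      cOp_mul_cOp_cancel (hwu' s hs), hPWd s hs hs1]
  · -- hDW
    intro s hs n hn
    beta_reduce
    have hzero : Bdd 0 (0 : MDO) := fun j _ => rfl
    have hW1 : mul (W s) (cOp (1 : Func)) = W s := by
      rw [cOp_one_eq, mul_one_right (hWbdd s hs)]
    have heqW : opD n (W s) = mul (Bc (L s) n) (W s) - mul (W s) (0 : MDO) := by
      rw [mul_zero_right, sub_zero]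
      exact hDWd s hs n hn
    have hD1 : D n (1 : Func) = (0 : Func) * 1 := by rw [D_one, zero_mul]
    have h20 : (1 : Func) * 1 = 1 := one_mul 1
    have hgd := gauge_deriv (hWbdd s hs) (bdd_Bc (L s) n) hzero
      h20 (hwu' s hs) hD1 (keyDi s hs n hn) heqW
    rw [hW1] at hgd
    rw [mul_zero_left, mul_zero_right, neg_zero, cOp_zero, add_zero,
      mul_zero_right, sub_zero] at hgd
    rw [hgd, hgam s n]
    -- identify the Bcmkp operator
    have hBc : Bcmkp (mul (cOp (Ring.inverse (W s (nn s)))) (mul (L s) (cOp (W s (nn s))))) n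
        = mul (cOp (Ring.inverse (W s (nn s)))) (mul (Bc (L s) n) (cOp (W s (nn s))))
          + cOp (npow (L s) n 0) := by
      show Bmkp _ n - npow _ n = _
      rw [hBmkp s hs n, hnp s hs n]
      have h1 : mul (Bc (L s) n) (cOp (W s (nn s)))
          = mul (Bop (L s) n) (cOp (W s (nn s))) - mul (npow (L s) n) (cOp (W s (nn s))) :=
        mul_sub_left (bdd_Bop (hLbdd s hs) n) (bdd_npow (hLbdd s hs) n) (bdd_cOp _)
      have h2 : mul (cOp (Ring.inverse (W s (nn s)))) (mul (Bc (L s) n) (cOp (W s (nn s))))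
          = mul (cOp (Ring.inverse (W s (nn s)))) (mul (Bop (L s) n) (cOp (W s (nn s))))
            - mul (cOp (Ring.inverse (W s (nn s)))) (mul (npow (L s) n) (cOp (W s (nn s)))) := by
        rw [h1, mul_cOp_left_sub]
      rw [h2]
      abel
    rw [hBc]


end CmKPPaper
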